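/- Let R be an associative ring with unity. Suppose a left R-module M admits an exact sequence ··· → D₁ → D₀ → D₋₁ → D₋₂ → ··· of Ding projective modules with M ≅ ker(D₀ → D₋₁) such that Hom_R(−, H) leaves the sequence exact for every Gorenstein flat (equivalently, Ding flat) left R-module H. Then M is Ding projective; conversely every Ding projective module admits such a sequence. -/

import Mathlib

universe u

open scoped TensorProduct DirectSum

/-- The subgroup of `E ⊗[ℤ] F` by which one quotients to obtain the balanced tensor
product `E ⊗_R F` of a right `R`-module `E` and a left `R`-module `F`. -/
def balancedSub (R : Type u) [Ring R] (E F : Type u) [AddCommGroup E] [Module Rᵐᵒᵖ E]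
    [AddCommGroup F] [Module R F] : Submodule ℤ (TensorProduct ℤ E F) :=
  Submodule.span ℤ
    {x | ∃ (r : R) (e : E) (f : F),
      x = (MulOpposite.op r • e) ⊗ₜ[ℤ] f - e ⊗ₜ[ℤ] (r • f)}

/-- The tensor product `E ⊗_R F` of a right `R`-module `E` and a left `R`-module `F`
over a possibly noncommutative ring `R`, realized as a quotient of `E ⊗[ℤ] F`. -/
def ModTensor (R : Type u) [Ring R] (E F : Type u) [AddCommGroup E] [Module Rᵐᵒᵖ E]
    [AddCommGroup F] [Module R F] : Type u :=
  TensorProduct ℤ E F ⧸ balancedSub R E F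

noncomputable instance (R : Type u) [Ring R] (E F : Type u) [AddCommGroup E] [Module Rᵐᵒᵖ E]
    [AddCommGroup F] [Module R F] : AddCommGroup (ModTensor R E F) :=
  inferInstanceAs (AddCommGroup (TensorProduct ℤ E F ⧸ balancedSub R E F))

/-- The map `E ⊗_R F → E' ⊗_R F` induced by a map `g : E → E'` of right `R`-modules. -/
noncomputable def ModTensor.mapLeft (R : Type u) [Ring R] {E E' : Type u} [AddCommGroup E]
    [Module Rᵐᵒᵖ E] [AddCommGroup E'] [Module Rᵐᵒᵖ E'] (F : Type u) [AddCommGroup F]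
    [Module R F] (g : E →ₗ[Rᵐᵒᵖ] E') : ModTensor R E F →ₗ[ℤ] ModTensor R E' F :=
  Submodule.mapQ (balancedSub R E F) (balancedSub R E' F)
    (TensorProduct.map (g.restrictScalars ℤ) LinearMap.id)
    (by
      rw [balancedSub, Submodule.span_le]
      rintro x ⟨r, e, f, rfl⟩
      refine Submodule.subset_span ⟨r, g e, f, ?_⟩
      have h : TensorProduct.map (g.restrictScalars ℤ) (LinearMap.id : F →ₗ[ℤ] F)
          ((MulOpposite.op r • e) ⊗ₜ[ℤ] f - e ⊗ₜ[ℤ] (r • f)) =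
          (MulOpposite.op r • g e) ⊗ₜ[ℤ] f - g e ⊗ₜ[ℤ] (r • f) := by
        simp [map_sub, TensorProduct.map_tmul, map_smul]
      exact h)

/-- The map `E ⊗_R F → E ⊗_R F'` induced by a map `f : F → F'` of left `R`-modules. -/
noncomputable def ModTensor.mapRight (R : Type u) [Ring R] (E : Type u) [AddCommGroup E]
    [Module Rᵐᵒᵖ E] {F F' : Type u} [AddCommGroup F] [Module R F] [AddCommGroup F']
    [Module R F'] (f : F →ₗ[R] F') : ModTensor R E F →ₗ[ℤ] ModTensor R E F' :=
  Submodule.mapQ (balancedSub R E F) (balancedSub R E F')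
    (TensorProduct.map LinearMap.id (f.restrictScalars ℤ))
    (by
      rw [balancedSub, Submodule.span_le]
      rintro x ⟨r, e, y, rfl⟩
      refine Submodule.subset_span ⟨r, e, f y, ?_⟩
      have h : TensorProduct.map (LinearMap.id : E →ₗ[ℤ] E) (f.restrictScalars ℤ)
          ((MulOpposite.op r • e) ⊗ₜ[ℤ] y - e ⊗ₜ[ℤ] (r • y)) =
          (MulOpposite.op r • e) ⊗ₜ[ℤ] f y - e ⊗ₜ[ℤ] (r • f y) := by
        simp [map_sub, TensorProduct.map_tmul, map_smul]
      exact h)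

/-- A left module `F` over a (possibly noncommutative) ring `R` is flat if tensoring
with `F` preserves injectivity of maps of right `R`-modules. -/
def IsFlatModule (R : Type u) [Ring R] (F : Type u) [AddCommGroup F] [Module R F] : Prop :=
  ∀ (E E' : Type u) [AddCommGroup E] [Module Rᵐᵒᵖ E] [AddCommGroup E'] [Module Rᵐᵒᵖ E']
    (g : E →ₗ[Rᵐᵒᵖ] E'), Function.Injective g →
      Function.Injective (ModTensor.mapLeft R F g)

/-- `Ext^i_R(M, L) = 0`, expressed using the `Ext` functor on the category of left
`R`-modules (with its `ℤ`-linear structure). -/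
def ExtIsZero (R : Type u) [Ring R] (i : ℕ) (M L : Type u) [AddCommGroup M] [Module R M]
    [AddCommGroup L] [Module R L] : Prop :=
  Subsingleton ((((_root_.Ext ℤ (ModuleCat.{u} R) i).obj
    (Opposite.op (ModuleCat.of R M))).obj (ModuleCat.of R L)) : Type u)

/-- `FlatDimLE R n L` means the left `R`-module `L` admits a flat resolution of
length at most `n`. -/
def FlatDimLE (R : Type u) [Ring R] : ℕ → ModuleCat.{u} R → Prop
  | 0, L => IsFlatModule R L
  | n + 1, L =>
    ∃ (F K : ModuleCat.{u} R) (ι : (K : Type u) →ₗ[R] F) (π : (F : Type u) →ₗ[R] L),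
      IsFlatModule R F ∧ Function.Injective ι ∧ Function.Surjective π ∧
      Function.Exact ι π ∧ FlatDimLE R n K

/-- A left `R`-module `L` has finite flat dimension if it admits a finite resolution
by flat modules. -/
def HasFiniteFlatDimension (R : Type u) [Ring R] (L : Type u) [AddCommGroup L]
    [Module R L] : Prop :=
  ∃ n : ℕ, FlatDimLE R n (ModuleCat.of R L)

/-- A left `R`-module `M` is Ding projective if there is an exact sequence
`⋯ → P₁ → P₀ → P₋₁ → P₋₂ → ⋯` of projective modules with `M ≅ ker (P₀ → P₋₁)`
which stays exact under `Hom_R(-, F)` for every flat module `F`. -/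
def IsDingProjective (R : Type u) [Ring R] (M : Type u) [AddCommGroup M] [Module R M] : Prop :=
  ∃ (P : ℤ → ModuleCat.{u} R) (d : ∀ n : ℤ, (P (n + 1) : Type u) →ₗ[R] P n),
    (∀ n, Module.Projective R (P n)) ∧
    (∀ n, Function.Exact (d (n + 1)) (d n)) ∧
    (∀ (F : Type u) [AddCommGroup F] [Module R F], IsFlatModule R F →
      ∀ n : ℤ, Function.Exact
        (fun g : (P n : Type u) →ₗ[R] F => g ∘ₗ d n)
        (fun g : (P (n + 1) : Type u) →ₗ[R] F => g ∘ₗ d (n + 1))) ∧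
    Nonempty (M ≃ₗ[R] LinearMap.ker (d (-1)))

/-- A left `R`-module `M` is two-degree Ding projective if there is an exact sequence
`⋯ → D₁ → D₀ → D₋₁ → D₋₂ → ⋯` of Ding projective modules with `M ≅ ker (D₀ → D₋₁)`
which stays exact under `Hom_R(-, F)` for every flat module `F`. -/
def IsTwoDegreeDingProjective (R : Type u) [Ring R] (M : Type u) [AddCommGroup M]
    [Module R M] : Prop :=
  ∃ (D : ℤ → ModuleCat.{u} R) (d : ∀ n : ℤ, (D (n + 1) : Type u) →ₗ[R] D n),
    (∀ n, IsDingProjective R (D n)) ∧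
    (∀ n, Function.Exact (d (n + 1)) (d n)) ∧
    (∀ (F : Type u) [AddCommGroup F] [Module R F], IsFlatModule R F →
      ∀ n : ℤ, Function.Exact
        (fun g : (D n : Type u) →ₗ[R] F => g ∘ₗ d n)
        (fun g : (D (n + 1) : Type u) →ₗ[R] F => g ∘ₗ d (n + 1))) ∧
    Nonempty (M ≃ₗ[R] LinearMap.ker (d (-1)))

/-- A left `R`-module `M` is strongly two-degree Ding projective if there is an exact
sequence `⋯ →f D →f D →f D →f ⋯` with `D` Ding projective and a single map `f`, with
`M ≅ ker f`, which stays exact under `Hom_R(-, F)` for every flat module `F`. -/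
def IsStronglyTwoDegreeDingProjective (R : Type u) [Ring R] (M : Type u) [AddCommGroup M]
    [Module R M] : Prop :=
  ∃ (D : ModuleCat.{u} R) (f : (D : Type u) →ₗ[R] D),
    IsDingProjective R D ∧
    Function.Exact f f ∧
    (∀ (F : Type u) [AddCommGroup F] [Module R F], IsFlatModule R F →
      Function.Exact
        (fun g : (D : Type u) →ₗ[R] F => g ∘ₗ f)
        (fun g : (D : Type u) →ₗ[R] F => g ∘ₗ f)) ∧
    Nonempty (M ≃ₗ[R] LinearMap.ker f)

/-- A left `R`-module `M` is Gorenstein projective if there is an exact sequence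
`⋯ → P₁ → P₀ → P₋₁ → P₋₂ → ⋯` of projective modules with `M ≅ ker (P₀ → P₋₁)`
which stays exact under `Hom_R(-, Q)` for every projective module `Q`. -/
def IsGorensteinProjective (R : Type u) [Ring R] (M : Type u) [AddCommGroup M]
    [Module R M] : Prop :=
  ∃ (P : ℤ → ModuleCat.{u} R) (d : ∀ n : ℤ, (P (n + 1) : Type u) →ₗ[R] P n),
    (∀ n, Module.Projective R (P n)) ∧
    (∀ n, Function.Exact (d (n + 1)) (d n)) ∧
    (∀ (Q : Type u) [AddCommGroup Q] [Module R Q], Module.Projective R Q →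
      ∀ n : ℤ, Function.Exact
        (fun g : (P n : Type u) →ₗ[R] Q => g ∘ₗ d n)
        (fun g : (P (n + 1) : Type u) →ₗ[R] Q => g ∘ₗ d (n + 1))) ∧
    Nonempty (M ≃ₗ[R] LinearMap.ker (d (-1)))

/-- A left `R`-module `H` is Gorenstein flat if there is an exact sequence
`⋯ → F₁ → F₀ → F₋₁ → F₋₂ → ⋯` of flat modules with `H ≅ ker (F₀ → F₋₁)` which stays
exact under `E ⊗_R -` for every injective right `R`-module `E`. -/
def IsGorensteinFlat (R : Type u) [Ring R] (H : Type u) [AddCommGroup H] [Module R H] : Prop :=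
  ∃ (F : ℤ → ModuleCat.{u} R) (d : ∀ n : ℤ, (F (n + 1) : Type u) →ₗ[R] F n),
    (∀ n, IsFlatModule R (F n)) ∧
    (∀ n, Function.Exact (d (n + 1)) (d n)) ∧
    (∀ (E : Type u) [AddCommGroup E] [Module Rᵐᵒᵖ E], Module.Injective Rᵐᵒᵖ E →
      ∀ n : ℤ, Function.Exact
        (ModTensor.mapRight R E (d (n + 1)))
        (ModTensor.mapRight R E (d n))) ∧
    Nonempty (H ≃ₗ[R] LinearMap.ker (d (-1)))

/-- A left `R`-module `E` is FP-injective if `Ext¹_R(F, E) = 0` for every finitely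
presented module `F`. -/
def IsFPInjective (R : Type u) [Ring R] (E : Type u) [AddCommGroup E] [Module R E] : Prop :=
  ∀ (F : Type u) [AddCommGroup F] [Module R F], Module.FinitePresentation R F →
    ExtIsZero R 1 F E

/-- A left `R`-module `M` is Ding injective if there is an exact sequence
`⋯ → E₁ → E₀ → E₋₁ → E₋₂ → ⋯` of injective modules with `M ≅ ker (E₀ → E₋₁)`
which stays exact under `Hom_R(H, -)` for every FP-injective module `H`. -/
def IsDingInjective (R : Type u) [Ring R] (M : Type u) [AddCommGroup M] [Module R M] : Prop :=
  ∃ (E : ℤ → ModuleCat.{u} R) (d : ∀ n : ℤ, (E (n + 1) : Type u) →ₗ[R] E n),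
    (∀ n, Module.Injective R (E n)) ∧
    (∀ n, Function.Exact (d (n + 1)) (d n)) ∧
    (∀ (H : Type u) [AddCommGroup H] [Module R H], IsFPInjective R H →
      ∀ n : ℤ, Function.Exact
        (fun g : H →ₗ[R] (E (n + 1 + 1) : Type u) => d (n + 1) ∘ₗ g)
        (fun g : H →ₗ[R] (E (n + 1) : Type u) => d n ∘ₗ g)) ∧
    Nonempty (M ≃ₗ[R] LinearMap.ker (d (-1)))

/-- A left `R`-module `M` is two-degree Ding injective if there is an exact sequence
`⋯ → D₁ → D₀ → D₋₁ → D₋₂ → ⋯` of Ding injective modules with `M ≅ ker (D₀ → D₋₁)`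
which stays exact under `Hom_R(H, -)` for every FP-injective module `H`. -/
def IsTwoDegreeDingInjective (R : Type u) [Ring R] (M : Type u) [AddCommGroup M]
    [Module R M] : Prop :=
  ∃ (D : ℤ → ModuleCat.{u} R) (d : ∀ n : ℤ, (D (n + 1) : Type u) →ₗ[R] D n),
    (∀ n, IsDingInjective R (D n)) ∧
    (∀ n, Function.Exact (d (n + 1)) (d n)) ∧
    (∀ (H : Type u) [AddCommGroup H] [Module R H], IsFPInjective R H →
      ∀ n : ℤ, Function.Exact
        (fun g : H →ₗ[R] (D (n + 1 + 1) : Type u) => d (n + 1) ∘ₗ g)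
        (fun g : H →ₗ[R] (D (n + 1) : Type u) => d n ∘ₗ g)) ∧
    Nonempty (M ≃ₗ[R] LinearMap.ker (d (-1)))

section DingWork
namespace DingWork

variable {R : Type u} [Ring R]

/-- Equivalence of a module with the kernel of a map that is zero on every element. -/
noncomputable def kerZeroEquiv {M N : Type u} [AddCommGroup M] [Module R M] [AddCommGroup N]
    [Module R N] (f : M →ₗ[R] N) (h : ∀ x, f x = 0) : M ≃ₗ[R] LinearMap.ker f where
  toFun x := ⟨x, LinearMap.mem_ker.mpr (h x)⟩
  invFun y := y.1
  map_add' _ _ := rfl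
  map_smul' _ _ := rfl
  left_inv _ := rfl
  right_inv _ := rfl

theorem not_even_neg_one : ¬ Even (-1 : ℤ) := by rw [Int.even_iff]; decide

theorem exact_zero_id {S A : Type*} [Semiring S] [AddCommMonoid A] [Module S A] :
    Function.Exact (0 : A →ₗ[S] A) (LinearMap.id : A →ₗ[S] A) := by
  intro y
  constructor
  · intro h; exact ⟨0, by simpa using h.symm⟩
  · rintro ⟨x, rfl⟩; simp

theorem exact_id_zero {S A : Type*} [Semiring S] [AddCommMonoid A] [Module S A] :
    Function.Exact (LinearMap.id : A →ₗ[S] A) (0 : A →ₗ[S] A) := by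
  intro y
  constructor
  · intro _; exact ⟨y, rfl⟩
  · intro _; rfl

/-- The "parity" differential on a constant complex:  identity on even indices. -/
noncomputable def pard (A : Type u) [AddCommGroup A] [Module R A] (n : ℤ) : A →ₗ[R] A :=
  if Even n then LinearMap.id else 0

theorem pard_even {A : Type u} [AddCommGroup A] [Module R A] {n : ℤ} (h : Even n) :
    pard (R := R) A n = LinearMap.id := if_pos h

theorem pard_odd {A : Type u} [AddCommGroup A] [Module R A] {n : ℤ} (h : ¬ Even n) :
    pard (R := R) A n = 0 := if_neg h

theorem not_even_succ {n : ℤ} (h : Even n) : ¬ Even (n + 1) := by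
  simp [Int.even_add_one, h]

theorem pard_exact {A : Type u} [AddCommGroup A] [Module R A] (n : ℤ) :
    Function.Exact (pard (R := R) A (n + 1)) (pard (R := R) A n) := by
  by_cases h : Even n
  · rw [pard_even h, pard_odd (not_even_succ h)]
    exact exact_zero_id
  · rw [pard_odd h, pard_even (Int.even_add_one.mpr h)]
    exact exact_id_zero

theorem pard_hom_exact {A H : Type u} [AddCommGroup A] [Module R A] [AddCommGroup H]
    [Module R H] (n : ℤ) :
    Function.Exact (fun g : A →ₗ[R] H => g ∘ₗ pard (R := R) A n)
      (fun g : A →ₗ[R] H => g ∘ₗ pard (R := R) A (n + 1)) := by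
  by_cases h : Even n
  · rw [pard_even h, pard_odd (not_even_succ h)]
    intro ψ
    constructor
    · intro _; exact ⟨ψ, by simp⟩
    · intro _; simp
  · rw [pard_odd h, pard_even (Int.even_add_one.mpr h)]
    intro ψ
    constructor
    · intro h0
      simp only [LinearMap.comp_id] at h0
      exact ⟨0, by simp [h0]⟩
    · rintro ⟨φ, rfl⟩; simp
  
theorem pard_neg_one_eq_zero {A : Type u} [AddCommGroup A] [Module R A] :
    pard (R := R) A (-1) = 0 := pard_odd not_even_neg_one

/-- Every projective module is Ding projective. -/
theorem isDingProjective_of_projective (P : Type u) [AddCommGroup P] [Module R P]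
    (hP : Module.Projective R P) : IsDingProjective R P :=
  ⟨fun _ => ModuleCat.of R P, fun n => pard (R := R) P n, fun _ => hP,
    fun n => pard_exact n, fun F _ _ _ n => pard_hom_exact n,
    ⟨kerZeroEquiv _ fun x => by
      show (pard (R := R) P (-1)) x = 0
      rw [pard_neg_one_eq_zero]; rfl⟩⟩

theorem mapRight_id {E F : Type u} [AddCommGroup E] [Module Rᵐᵒᵖ E] [AddCommGroup F]
    [Module R F] :
    ModTensor.mapRight R E (LinearMap.id : F →ₗ[R] F) = LinearMap.id := by
  apply LinearMap.ext; intro x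
  obtain ⟨y, rfl⟩ := Submodule.Quotient.mk_surjective (balancedSub R E F) x
  simp only [ModTensor.mapRight, Submodule.mapQ_apply]
  have h1 : ((LinearMap.id : F →ₗ[R] F).restrictScalars ℤ) = LinearMap.id := rfl
  have h2 : (TensorProduct.map (LinearMap.id : E →ₗ[ℤ] E)
      ((LinearMap.id : F →ₗ[R] F).restrictScalars ℤ)) y = y := by
    rw [h1, TensorProduct.map_id]; rfl
  erw [Submodule.mapQ_apply, h2]
  rfl

theorem mapRight_zero {E F F' : Type u} [AddCommGroup E] [Module Rᵐᵒᵖ E] [AddCommGroup F]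
    [Module R F] [AddCommGroup F'] [Module R F'] :
    ModTensor.mapRight R E (0 : F →ₗ[R] F') = 0 := by
  apply LinearMap.ext; intro x
  obtain ⟨y, rfl⟩ := Submodule.Quotient.mk_surjective (balancedSub R E F) x
  simp only [ModTensor.mapRight, Submodule.mapQ_apply]
  have h1 : ((0 : F →ₗ[R] F').restrictScalars ℤ) = 0 := rfl
  have h2 : (TensorProduct.map (LinearMap.id : E →ₗ[ℤ] E)
      ((0 : F →ₗ[R] F').restrictScalars ℤ)) y = 0 := by
    rw [h1]
    induction y with
    | zero => simp
    | tmul a b => simp [TensorProduct.map_tmul, TensorProduct.tmul_zero]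
    | add a b ha hb => simp [map_add, ha, hb]
  erw [Submodule.mapQ_apply, h2]
  simp
  rfl

/-- Every flat module is Gorenstein flat. -/
theorem isGorensteinFlat_of_flat (F : Type u) [AddCommGroup F] [Module R F]
    (hF : IsFlatModule R F) : IsGorensteinFlat R F := by
  refine ⟨fun _ => ModuleCat.of R F, fun n => pard (R := R) F n, fun _ => hF,
    fun n => pard_exact n, ?_, ⟨kerZeroEquiv _ fun x => by
      show (pard (R := R) F (-1)) x = 0
      rw [pard_neg_one_eq_zero]; rfl⟩⟩
  intro E _ _ _ n
  show Function.Exact (⇑(ModTensor.mapRight R E (pard (R := R) F (n + 1))))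
    (⇑(ModTensor.mapRight R E (pard (R := R) F n)))
  by_cases h : Even n
  · rw [pard_even h, pard_odd (not_even_succ h), mapRight_id, mapRight_zero]
    exact exact_zero_id
  · rw [pard_odd h, pard_even (Int.even_add_one.mpr h), mapRight_id, mapRight_zero]
    exact exact_id_zero

end DingWork
end DingWork
section DingFlat
namespace DingWork

variable {R : Type u} [Ring R]

section MT

variable {E E' : Type u} [AddCommGroup E] [Module Rᵐᵒᵖ E] [AddCommGroup E'] [Module Rᵐᵒᵖ E']
variable {F F' F'' : Type u} [AddCommGroup F] [Module R F] [AddCommGroup F'] [Module R F']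
variable [AddCommGroup F''] [Module R F'']

theorem mapRight_comp (f1 : F →ₗ[R] F') (f2 : F' →ₗ[R] F'') (x : ModTensor R E F) :
    ModTensor.mapRight R E f2 (ModTensor.mapRight R E f1 x)
      = ModTensor.mapRight R E (f2 ∘ₗ f1) x := by
  obtain ⟨y, rfl⟩ := Submodule.Quotient.mk_surjective (balancedSub R E F) x
  simp only [ModTensor.mapRight]
  repeat erw [Submodule.mapQ_apply]
  congr 1
  induction y with
  | zero => erw [map_zero]
  | tmul a b => rfl
  | add a b ha hb => erw [map_add, map_add, map_add, ha, hb]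

theorem mapLeft_mapRight_comm (g : E →ₗ[Rᵐᵒᵖ] E') (f : F →ₗ[R] F') (x : ModTensor R E F) :
    ModTensor.mapRight R E' f (ModTensor.mapLeft R F g x)
      = ModTensor.mapLeft R F' g (ModTensor.mapRight R E f x) := by
  obtain ⟨y, rfl⟩ := Submodule.Quotient.mk_surjective (balancedSub R E F) x
  simp only [ModTensor.mapRight, ModTensor.mapLeft]
  repeat erw [Submodule.mapQ_apply]
  congr 1
  induction y with
  | zero => erw [map_zero]
  | tmul a b => rfl
  | add a b ha hb => erw [map_add, map_add, map_add, map_add, ha, hb]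

end MT

section Free

variable {E E' : Type u} [AddCommGroup E] [Module Rᵐᵒᵖ E] [AddCommGroup E'] [Module Rᵐᵒᵖ E']
variable (ι : Type u)

/-- `r ↦ op r • e` as an additive monoid hom. -/
noncomputable def opSmulAdd (e : E) : R →+ E where
  toFun r := MulOpposite.op r • e
  map_zero' := by simp
  map_add' a b := by
    show MulOpposite.op (a + b) • e = MulOpposite.op a • e + MulOpposite.op b • e
    rw [MulOpposite.op_add, add_smul]

@[simp] theorem opSmulAdd_apply (e : E) (r : R) : opSmulAdd e r = MulOpposite.op r • e := rfl

/-- `f ↦ (i ↦ op (f i) • e)` as an additive monoid hom. -/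
noncomputable def toFreeAux (e : E) : (ι →₀ R) →+ (ι →₀ E) :=
  Finsupp.mapRange.addMonoidHom (opSmulAdd e)

theorem toFreeAux_apply (e : E) (f : ι →₀ R) (i : ι) :
    toFreeAux ι e f i = MulOpposite.op (f i) • e := by
  simp [toFreeAux, Finsupp.mapRange.addMonoidHom, Finsupp.mapRange_apply]

/-- The bilinear map underlying `toFree`. -/
noncomputable def LFree : E →ₗ[ℤ] ((ι →₀ R) →ₗ[ℤ] (ι →₀ E)) :=
  AddMonoidHom.toIntLinearMap
    { toFun := fun e => (toFreeAux ι e).toIntLinearMap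
      map_zero' := by
        apply LinearMap.ext; intro f; apply Finsupp.ext; intro i
        show toFreeAux ι (0 : E) f i = 0
        rw [toFreeAux_apply]; simp
      map_add' := fun e1 e2 => by
        apply LinearMap.ext; intro f; apply Finsupp.ext; intro i
        show toFreeAux ι (e1 + e2) f i = ((toFreeAux ι e1).toIntLinearMap f
          + (toFreeAux ι e2).toIntLinearMap f) i
        rw [toFreeAux_apply]
        have : ((toFreeAux ι e1).toIntLinearMap f + (toFreeAux ι e2).toIntLinearMap f) i
            = toFreeAux ι e1 f i + toFreeAux ι e2 f i := rfl
        rw [this, toFreeAux_apply, toFreeAux_apply, smul_add] }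

theorem LFree_apply (e : E) (f : ι →₀ R) (i : ι) :
    LFree ι e f i = MulOpposite.op (f i) • e := toFreeAux_apply ι e f i

/-- The canonical map `E ⊗_R R^{(ι)} → E^{(ι)}`. -/
noncomputable def toFree : ModTensor R E (ι →₀ R) →ₗ[ℤ] (ι →₀ E) :=
  Submodule.liftQ (balancedSub R E (ι →₀ R)) (TensorProduct.lift (LFree ι))
    (by
      rw [balancedSub, Submodule.span_le]
      rintro x ⟨r, e, f, rfl⟩
      erw [SetLike.mem_coe, LinearMap.mem_ker, map_sub]
      erw [TensorProduct.lift.tmul, TensorProduct.lift.tmul]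
      rw [sub_eq_zero]
      apply Finsupp.ext; intro i
      rw [LFree_apply, LFree_apply]
      rw [Finsupp.smul_apply, smul_eq_mul, smul_smul, ← MulOpposite.op_mul])

theorem toFree_mk_tmul (e : E) (f : ι →₀ R) (i : ι) :
    toFree ι (Submodule.Quotient.mk (e ⊗ₜ[ℤ] f) : ModTensor R E (ι →₀ R)) i
      = MulOpposite.op (f i) • e := by
  simp only [toFree]
  erw [Submodule.liftQ_apply]
  erw [TensorProduct.lift.tmul]
  exact LFree_apply ι e f i

/-- The canonical map `E^{(ι)} → E ⊗_R R^{(ι)}`. -/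
noncomputable def ofFree : (ι →₀ E) →+ ModTensor R E (ι →₀ R) :=
  Finsupp.liftAddHom fun i =>
    { toFun := fun e =>
        (Submodule.Quotient.mk (e ⊗ₜ[ℤ] (Finsupp.single i (1 : R))) : ModTensor R E (ι →₀ R))
      map_zero' := by
        show (Submodule.Quotient.mk ((0 : E) ⊗ₜ[ℤ] (Finsupp.single i (1 : R)))
          : ModTensor R E (ι →₀ R)) = 0
        rw [TensorProduct.zero_tmul]; rfl
      map_add' := fun a b => by
        show (Submodule.Quotient.mk ((a + b) ⊗ₜ[ℤ] (Finsupp.single i (1 : R)))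
          : ModTensor R E (ι →₀ R)) = _
        rw [TensorProduct.add_tmul]; rfl }

theorem ofFree_single (i : ι) (e : E) :
    ofFree ι (Finsupp.single i e)
      = (Submodule.Quotient.mk (e ⊗ₜ[ℤ] (Finsupp.single i (1 : R))) : ModTensor R E (ι →₀ R)) :=
  Finsupp.liftAddHom_apply_single _ i e

theorem toFree_ofFree (x : ι →₀ E) : toFree (R := R) ι (ofFree (R := R) ι x) = x := by
  induction x using Finsupp.induction_linear with
  | zero => rw [map_zero, map_zero]
  | add a b ha hb => rw [map_add, map_add, ha, hb]
  | single i e =>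
    rw [ofFree_single]
    apply Finsupp.ext; intro j
    rw [toFree_mk_tmul]
    by_cases h : i = j
    · subst h; rw [Finsupp.single_eq_same, Finsupp.single_eq_same, MulOpposite.op_one, one_smul]
    · rw [Finsupp.single_eq_of_ne' h, Finsupp.single_eq_of_ne' h, MulOpposite.op_zero, zero_smul]

theorem ofFree_mk (y : TensorProduct ℤ E (ι →₀ R)) :
    ofFree ι (toFree ι (Submodule.Quotient.mk y : ModTensor R E (ι →₀ R)))
      = Submodule.Quotient.mk y := by
  induction y with
  | zero =>
    rw [show @Eq (ModTensor R E (ι →₀ R)) (Submodule.Quotient.mk 0) 0 from rfl]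
    rw [map_zero, map_zero]
  | add a b ha hb =>
    rw [show (Submodule.Quotient.mk (a + b) : ModTensor R E (ι →₀ R))
        = Submodule.Quotient.mk a + Submodule.Quotient.mk b from rfl]
    erw [map_add, map_add, ha, hb]
    rfl
  | tmul e f =>
    -- toFree (mk (e ⊗ f)) = fun i => op (f i) • e  =  mapRange (opSmulAdd e) f
    have key : ∀ (e : E) (f : ι →₀ R),
        ofFree ι (toFreeAux ι e f) = Submodule.Quotient.mk (e ⊗ₜ[ℤ] f) := by
      intro e f
      induction f using Finsupp.induction_linear with
      | zero => rw [map_zero, map_zero, TensorProduct.tmul_zero]; rfl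
      | add a b ha hb =>
        rw [map_add, map_add, ha, hb, TensorProduct.tmul_add]; rfl
      | single i r =>
        have h1 : toFreeAux ι e (Finsupp.single i r) = Finsupp.single i (MulOpposite.op r • e) := by
          apply Finsupp.ext; intro j
          rw [toFreeAux_apply]
          by_cases h : i = j
          · subst h; rw [Finsupp.single_eq_same, Finsupp.single_eq_same]
          · rw [Finsupp.single_eq_of_ne' h, Finsupp.single_eq_of_ne' h, MulOpposite.op_zero,
              zero_smul]
        rw [h1, ofFree_single]
        erw [Submodule.Quotient.eq]
        have h2 : Finsupp.single i r = r • Finsupp.single i (1 : R) := by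
          rw [Finsupp.smul_single, smul_eq_mul, mul_one]
        rw [h2]
        exact Submodule.subset_span ⟨r, e, Finsupp.single i (1 : R), rfl⟩
    have h3 : toFree ι (Submodule.Quotient.mk (e ⊗ₜ[ℤ] f) : ModTensor R E (ι →₀ R))
        = toFreeAux ι e f := by
      apply Finsupp.ext; intro i
      rw [toFree_mk_tmul, toFreeAux_apply]
    rw [h3, key]

theorem toFree_bijective : Function.Bijective (toFree (R := R) (E := E) ι) := by
  constructor
  · intro a b hab
    obtain ⟨y, rfl⟩ := Submodule.Quotient.mk_surjective _ a
    obtain ⟨z, rfl⟩ := Submodule.Quotient.mk_surjective _ b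
    rw [← ofFree_mk ι y, ← ofFree_mk ι z, hab]
  · intro x
    exact ⟨ofFree ι x, toFree_ofFree ι x⟩

theorem toFree_mapLeft (g : E →ₗ[Rᵐᵒᵖ] E') (x : ModTensor R E (ι →₀ R)) :
    toFree ι (ModTensor.mapLeft R (ι →₀ R) g x)
      = Finsupp.mapRange g (map_zero g) (toFree ι x) := by
  obtain ⟨y, rfl⟩ := Submodule.Quotient.mk_surjective _ x
  induction y with
  | zero =>
    rw [show @Eq (ModTensor R E (ι →₀ R)) (Submodule.Quotient.mk 0) 0 from rfl]
    rw [map_zero, map_zero, map_zero]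
    apply Finsupp.ext; intro i; rw [Finsupp.mapRange_apply]; simp
  | add a b ha hb =>
    rw [show (Submodule.Quotient.mk (a + b) : ModTensor R E (ι →₀ R))
        = Submodule.Quotient.mk a + Submodule.Quotient.mk b from rfl]
    erw [map_add, map_add, ha, hb, map_add]
    apply Finsupp.ext; intro i
    rw [Finsupp.mapRange_apply, Finsupp.add_apply, Finsupp.add_apply, map_add,
      Finsupp.mapRange_apply, Finsupp.mapRange_apply]
  | tmul e f =>
    have h1 : ModTensor.mapLeft R (ι →₀ R) g
        (Submodule.Quotient.mk (e ⊗ₜ[ℤ] f) : ModTensor R E (ι →₀ R))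
        = (Submodule.Quotient.mk ((g e) ⊗ₜ[ℤ] f) : ModTensor R E' (ι →₀ R)) := by
      simp only [ModTensor.mapLeft]
      erw [Submodule.mapQ_apply]
      rfl
    rw [h1]
    apply Finsupp.ext; intro i
    rw [toFree_mk_tmul, Finsupp.mapRange_apply, toFree_mk_tmul, map_smul]

theorem isFlatModule_free : IsFlatModule R (ι →₀ R) := by
  intro E E' _ _ _ _ g hg
  have hinj : ∀ x, ModTensor.mapLeft R (ι →₀ R) g x = 0 → x = 0 := by
    intro x hx
    have h1 : toFree ι (ModTensor.mapLeft R (ι →₀ R) g x) = 0 := by rw [hx, map_zero]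
    rw [toFree_mapLeft] at h1
    have h2 : toFree ι x = 0 := by
      have := Finsupp.mapRange_injective (α := ι) g (map_zero g) hg
      apply this
      rw [h1]
      apply Finsupp.ext; intro i; rw [Finsupp.mapRange_apply]; simp
    have := (toFree_bijective (R := R) (E := E) ι).injective
    apply this
    rw [h2, map_zero]
  intro a b hab
  have : a - b = 0 := hinj _ (by rw [map_sub, hab, sub_self])
  exact sub_eq_zero.mp this

/-- Projective modules are flat. -/
theorem isFlatModule_of_projective (P : Type u) [AddCommGroup P] [Module R P]
    (hP : Module.Projective R P) : IsFlatModule R P := by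
  obtain ⟨s, hs⟩ := Module.projective_def.mp hP
  set T : (P →₀ R) →ₗ[R] P := Finsupp.linearCombination R id with hT
  have hTs : T ∘ₗ s = LinearMap.id := by
    apply LinearMap.ext; intro p; exact hs p
  intro E E' _ _ _ _ g hg
  have hinj : ∀ x, ModTensor.mapLeft R P g x = 0 → x = 0 := by
    intro x hx
    have h1 : ModTensor.mapLeft R (P →₀ R) g (ModTensor.mapRight R E s x) = 0 := by
      rw [← mapLeft_mapRight_comm, hx, map_zero]
    have hfree := isFlatModule_free (R := R) P E E' g hg
    have h2 : ModTensor.mapRight R E s x = 0 := hfree (by rw [h1, map_zero])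
    have h3 : x = ModTensor.mapRight R E T (ModTensor.mapRight R E s x) := by
      rw [mapRight_comp, hTs]
      rw [show ModTensor.mapRight R E (LinearMap.id : P →ₗ[R] P) = LinearMap.id from mapRight_id]
      rfl
    rw [h3, h2, map_zero]
  intro a b hab
  have : a - b = 0 := hinj _ (by rw [map_sub, hab, sub_self])
  exact sub_eq_zero.mp this

end Free

end DingWork
end DingFlat
section SplitVanSec
namespace DingWork

variable {R : Type u} [Ring R]

/-- Extension property along a map: any map to a flat module extends along it. -/
def ExtProp {A B : Type u} [AddCommGroup A] [Module R A] [AddCommGroup B] [Module R B]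
    (i : A →ₗ[R] B) : Prop :=
  ∀ (F : Type u) [AddCommGroup F] [Module R F], IsFlatModule R F →
    ∀ φ : A →ₗ[R] F, ∃ h : B →ₗ[R] F, h ∘ₗ i = φ

/-- `Ext¹(M, F) = 0` for all flat `F`: every extension of `M` by a flat module splits. -/
def SplitVan (M : Type u) [AddCommGroup M] [Module R M] : Prop :=
  ∀ (F : Type u) [AddCommGroup F] [Module R F], IsFlatModule R F →
    ∀ (W : Type u) [AddCommGroup W] [Module R W] (j : F →ₗ[R] W) (π : W →ₗ[R] M),
      Function.Injective j → Function.Surjective π → Function.Exact j π →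
        ∃ σ : M →ₗ[R] W, π ∘ₗ σ = LinearMap.id

/-- Factor a map through a surjection whose kernel it kills. -/
theorem descend {X Y F : Type u} [AddCommGroup X] [Module R X] [AddCommGroup Y] [Module R Y]
    [AddCommGroup F] [Module R F] (p : X →ₗ[R] Y) (hp : Function.Surjective p)
    (ψ : X →ₗ[R] F) (h : ∀ x, p x = 0 → ψ x = 0) : ∃ θ : Y →ₗ[R] F, θ ∘ₗ p = ψ := by
  have hle : LinearMap.ker p ≤ LinearMap.ker ψ := fun x hx =>
    LinearMap.mem_ker.mpr (h x (LinearMap.mem_ker.mp hx))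
  refine ⟨((LinearMap.ker p).liftQ ψ hle) ∘ₗ
    (LinearMap.quotKerEquivOfSurjective p hp).symm.toLinearMap, ?_⟩
  apply LinearMap.ext; intro x
  have h1 : (LinearMap.quotKerEquivOfSurjective p hp).symm (p x)
      = Submodule.Quotient.mk x := by
    apply (LinearMap.quotKerEquivOfSurjective p hp).injective
    rw [LinearEquiv.apply_symm_apply]
    rfl
  show ((LinearMap.ker p).liftQ ψ hle) ((LinearMap.quotKerEquivOfSurjective p hp).symm (p x)) = ψ x
  rw [h1, Submodule.liftQ_apply]

theorem splitVan_of_projective (P : Type u) [AddCommGroup P] [Module R P]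
    (hP : Module.Projective R P) : SplitVan (R := R) P := by
  intro F _ _ _ W _ _ j π hj hπ hex
  haveI := hP
  exact Module.projective_lifting_property π LinearMap.id hπ

theorem splitVan_of_equiv {M N : Type u} [AddCommGroup M] [Module R M] [AddCommGroup N]
    [Module R N] (e : M ≃ₗ[R] N) (h : SplitVan (R := R) M) : SplitVan (R := R) N := by
  intro F _ _ hF W _ _ j π hj hπ hex
  have hex' : Function.Exact j (e.symm.toLinearMap ∘ₗ π) := by
    intro y
    constructor
    · intro h0
      have h1 : π y = 0 := by
        have h2 := congrArg e h0
        simpa using h2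
      exact (hex y).mp h1
    · intro hy
      have h1 : π y = 0 := (hex y).mpr hy
      show e.symm (π y) = 0
      rw [h1, map_zero]
  obtain ⟨σ, hσ⟩ := h F hF W j (e.symm.toLinearMap ∘ₗ π) hj
    (fun m => (e.symm.surjective.comp hπ) m) hex'
  refine ⟨σ ∘ₗ e.symm.toLinearMap, ?_⟩
  apply LinearMap.ext; intro n
  have h3 := congrArg (fun z => e z) (LinearMap.congr_fun hσ (e.symm n))
  simpa using h3

/-- Lemma E: if `Ext¹(N,F) = 0` for flat `F`, then maps `Z → F` extend over
`Z ↪ Q` with cokernel `N`. -/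
theorem extProp_of_splitVan {Z Q N : Type u} [AddCommGroup Z] [Module R Z] [AddCommGroup Q]
    [Module R Q] [AddCommGroup N] [Module R N] (k : Z →ₗ[R] Q) (r : Q →ₗ[R] N)
    (hk : Function.Injective k) (hr : Function.Surjective r) (hex : Function.Exact k r)
    (hN : SplitVan (R := R) N) : ExtProp (R := R) k := by
  intro F _ _ hF φ
  have hrk : ∀ z, r (k z) = 0 := fun z => (hex (k z)).mpr ⟨z, rfl⟩
  -- the pushout W = (F × Q) ⧸ T where T = { (φ z, -k z) }
  set T : Submodule R (F × Q) := LinearMap.range (LinearMap.prod φ (-k)) with hT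
  obtain ⟨jW, πW, hjWinj, hπWsurj, hexW, hcomm, hexact2⟩ :
      ∃ (jW : F →ₗ[R] (F × Q) ⧸ T)
        (πW : ((F × Q) ⧸ T) →ₗ[R] N),
        Function.Injective jW ∧ Function.Surjective πW ∧ Function.Exact jW πW ∧
        (∀ f : F, jW f = Submodule.Quotient.mk (f, 0)) ∧
        (∀ x : F × Q, πW (Submodule.Quotient.mk x) = r x.2) := by
    refine ⟨T.mkQ ∘ₗ LinearMap.inl R F Q,
      T.liftQ (r ∘ₗ LinearMap.snd R F Q) ?_,
      ?_, ?_, ?_, fun f => rfl, fun x => rfl⟩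
    · rw [hT]
      rintro x ⟨z, rfl⟩
      apply LinearMap.mem_ker.mpr
      show r (-(k z)) = 0
      rw [map_neg, hrk z, neg_zero]
    · -- injectivity
      have h0 : ∀ a : F,
          Submodule.Quotient.mk (a, (0 : Q)) = (0 : (F × Q) ⧸ T) → a = 0 := by
        intro a ha
        have h2 : ((a, (0 : Q)) : F × Q) ∈ T :=
          (Submodule.Quotient.mk_eq_zero _).mp ha
        rw [hT] at h2
        obtain ⟨z, hz⟩ := h2
        have hz' : (φ z, -(k z)) = ((a, (0:Q)) : F × Q) := hz
        have h3 : k z = 0 := neg_eq_zero.mp (congrArg Prod.snd hz')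
        have h4 : z = 0 := hk (by rw [h3, map_zero])
        have h5 : φ z = a := congrArg Prod.fst hz'
        rw [h4, map_zero] at h5
        exact h5.symm
      intro a b hab
      have h6 : Submodule.Quotient.mk ((a - b, (0:Q)) : F × Q)
          = (0 : (F × Q) ⧸ T) := by
        have : (((a,(0:Q)) : F × Q) - (b, 0)) = (a - b, 0) := by
          ext <;> simp
        rw [← this, Submodule.Quotient.mk_sub, sub_eq_zero]
        exact hab
      have := h0 (a - b) h6
      exact sub_eq_zero.mp this
    · -- surjectivity
      intro n
      obtain ⟨q, hq⟩ := hr n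
      exact ⟨Submodule.Quotient.mk ((0 : F), q), hq⟩
    · -- exactness
      intro y
      constructor
      · intro h0
        obtain ⟨x, rfl⟩ := Submodule.Quotient.mk_surjective _ y
        have h1 : r x.2 = 0 := h0
        obtain ⟨z, hz⟩ := (hex x.2).mp h1
        refine ⟨x.1 + φ z, ?_⟩
        show Submodule.Quotient.mk ((x.1 + φ z, (0:Q)) : F × Q) = Submodule.Quotient.mk x
        rw [Submodule.Quotient.eq, hT]
        exact ⟨z, by ext <;> simp [hz]⟩
      · rintro ⟨f, rfl⟩
        show r (((f, (0:Q)) : F × Q)).2 = 0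
        exact map_zero r
  obtain ⟨σ, hσ⟩ := hN F hF _ jW πW hjWinj hπWsurj hexW
  -- ρ : Q → W,  q ↦ [ (0,q) ] - σ (r q), lands in range jW
  set ρ : Q →ₗ[R] ((F × Q) ⧸ T) :=
    (T.mkQ ∘ₗ LinearMap.inr R F Q) - σ ∘ₗ r with hρ
  have hρmem : ∀ q, ρ q ∈ LinearMap.range jW := by
    intro q
    have h1 : πW (ρ q) = 0 := by
      have h2 : πW (σ (r q)) = r q := LinearMap.congr_fun hσ (r q)
      have h3 : ρ q = Submodule.Quotient.mk ((0 : F), q) - σ (r q) := rfl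
      rw [h3, map_sub, h2, hexact2, sub_self]
    obtain ⟨f, hf⟩ := (hexW (ρ q)).mp h1
    exact ⟨f, hf⟩
  set eF := LinearEquiv.ofInjective jW hjWinj with heF
  refine ⟨eF.symm.toLinearMap ∘ₗ (ρ.codRestrict (LinearMap.range jW) hρmem), ?_⟩
  apply LinearMap.ext; intro z
  show eF.symm ⟨ρ (k z), hρmem (k z)⟩ = φ z
  apply eF.injective
  rw [LinearEquiv.apply_symm_apply]
  apply Subtype.ext
  have h4 : (eF (φ z) : ((F × Q) ⧸ T)) = jW (φ z) := rfl
  rw [h4]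
  show ρ (k z) = jW (φ z)
  have h5 : ρ (k z) = Submodule.Quotient.mk ((0 : F), k z) - σ (r (k z)) := rfl
  rw [h5, hrk z, map_zero, sub_zero, hcomm]
  rw [Submodule.Quotient.eq, hT]
  exact ⟨-z, by ext <;> simp⟩

/-- Lemma S: transfer of `SplitVan` along a presentation with the extension property. -/
theorem splitVan_of_presentation {K D M : Type u} [AddCommGroup K] [Module R K]
    [AddCommGroup D] [Module R D] [AddCommGroup M] [Module R M] (k : K →ₗ[R] D)
    (r : D →ₗ[R] M) (hk : Function.Injective k) (hr : Function.Surjective r)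
    (hex : Function.Exact k r) (hext : ExtProp (R := R) k) (hD : SplitVan (R := R) D) :
    SplitVan (R := R) M := by
  intro F _ _ hF W _ _ j π hj hπ hexW
  have hrk : ∀ z, r (k z) = 0 := fun z => (hex (k z)).mpr ⟨z, rfl⟩
  have hπj : ∀ f, π (j f) = 0 := fun f => (hexW (j f)).mpr ⟨f, rfl⟩
  -- pullback W' = ker (π ∘ fst - r ∘ snd) ⊆ W × D
  set W' : Submodule R (W × D) :=
    LinearMap.ker ((π ∘ₗ LinearMap.fst R W D) - (r ∘ₗ LinearMap.snd R W D)) with hW'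
  have hmem : ∀ x : W × D, x ∈ W' ↔ π x.1 = r x.2 := by
    intro x
    rw [hW', LinearMap.mem_ker, LinearMap.sub_apply, sub_eq_zero]
    rfl
  -- SES 0 → F → W' → D → 0
  set jW' : F →ₗ[R] W' := (LinearMap.prod j 0).codRestrict W'
    (fun f => (hmem _).mpr (by show π (j f) = r 0; rw [hπj f, map_zero])) with hjW'
  set pD : W' →ₗ[R] D := (LinearMap.snd R W D) ∘ₗ W'.subtype with hpD
  have hjW'inj : Function.Injective jW' := by
    intro a b hab
    apply hj
    exact congrArg (fun z : W' => (z : W × D).1) hab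
  have hpDsurj : Function.Surjective pD := by
    intro d
    obtain ⟨w, hw⟩ := hπ (r d)
    exact ⟨⟨(w, d), (hmem _).mpr hw⟩, rfl⟩
  have hexD : Function.Exact jW' pD := by
    intro z
    constructor
    · intro h0
      have h1 : π (z : W × D).1 = 0 := by
        have h2 := (hmem _).mp z.2
        rw [h2]
        show r ((z : W × D).2) = 0
        rw [show (z : W × D).2 = pD z from rfl, h0, map_zero]
      obtain ⟨f, hf⟩ := (hexW _).mp h1
      refine ⟨f, ?_⟩
      apply Subtype.ext
      have h3 : (z : W × D).2 = 0 := h0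
      show ((j f, (0:D)) : W × D) = (z : W × D)
      ext
      · exact hf
      · exact h3.symm
    · rintro ⟨f, rfl⟩
      rfl
  obtain ⟨s, hs⟩ := hD F hF W' jW' pD hjW'inj hpDsurj hexD
  set lam : D →ₗ[R] W := (LinearMap.fst R W D) ∘ₗ W'.subtype ∘ₗ s with hlam
  have hπlam : ∀ d, π (lam d) = r d := by
    intro d
    have h1 := (hmem _).mp (s d).2
    have h2 : (↑(s d) : W × D).2 = d := LinearMap.congr_fun hs d
    rw [show lam d = (↑(s d) : W × D).1 from rfl, h1, h2]
  -- γ : K → F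
  have hmemγ : ∀ x : K, lam (k x) ∈ LinearMap.range j := by
    intro x
    have h1 : π (lam (k x)) = 0 := by rw [hπlam, hrk]
    obtain ⟨f, hf⟩ := (hexW _).mp h1
    exact ⟨f, hf⟩
  set eF := LinearEquiv.ofInjective j hj with heF
  set γ : K →ₗ[R] F := eF.symm.toLinearMap ∘ₗ
    ((lam ∘ₗ k).codRestrict (LinearMap.range j) hmemγ) with hγ
  have hjγ : ∀ x, j (γ x) = lam (k x) := by
    intro x
    have h1 : eF (γ x) = ⟨lam (k x), hmemγ x⟩ := by
      show eF (eF.symm _) = _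
      rw [LinearEquiv.apply_symm_apply]
      apply Subtype.ext
      rfl
    have h2 := congrArg (fun z : LinearMap.range j => (z : W)) h1
    exact h2
  obtain ⟨δ, hδ⟩ := hext F hF γ
  -- σ0 = lam - j ∘ δ kills range k
  set σ0 : D →ₗ[R] W := lam - j ∘ₗ δ with hσ0
  obtain ⟨σ, hσ⟩ := descend r hr σ0 (by
    intro d hd
    obtain ⟨z, rfl⟩ := (hex d).mp hd
    show lam (k z) - j (δ (k z)) = 0
    rw [show δ (k z) = γ z from LinearMap.congr_fun hδ z, hjγ, sub_self])
  refine ⟨σ, ?_⟩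
  apply LinearMap.ext; intro m
  obtain ⟨d, rfl⟩ := hr m
  have h1 : σ (r d) = σ0 d := LinearMap.congr_fun hσ d
  show π (σ (r d)) = r d
  rw [h1]
  show π (lam d - j (δ d)) = r d
  rw [map_sub, hπlam, hπj, sub_zero]

end DingWork
end SplitVanSec
section SplitVanExt
namespace DingWork

variable {R : Type u} [Ring R]

/-- `SplitVan` is closed under extensions. -/
theorem splitVan_ext {A X B : Type u} [AddCommGroup A] [Module R A] [AddCommGroup X]
    [Module R X] [AddCommGroup B] [Module R B] (k : A →ₗ[R] X) (r : X →ₗ[R] B)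
    (hk : Function.Injective k) (hr : Function.Surjective r) (hex : Function.Exact k r)
    (hA : SplitVan (R := R) A) (hB : SplitVan (R := R) B) : SplitVan (R := R) X := by
  intro F _ _ hF W _ _ j π hj hπ hexW
  have hrk : ∀ z, r (k z) = 0 := fun z => (hex (k z)).mpr ⟨z, rfl⟩
  have hπj : ∀ f, π (j f) = 0 := fun f => (hexW (j f)).mpr ⟨f, rfl⟩
  -- Step 1: WA = π⁻¹(range k), an extension of A by F
  set WA : Submodule R W := Submodule.comap π (LinearMap.range k) with hWAdef
  set jA : F →ₗ[R] WA := LinearMap.codRestrict WA j (fun f => by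
    show π (j f) ∈ LinearMap.range k
    rw [hπj f]
    exact Submodule.zero_mem _) with hjA
  set eK := LinearEquiv.ofInjective k hk with heK
  have hcoeK : ∀ a : A, ((eK a : LinearMap.range k) : X) = k a := fun a => rfl
  set pA : WA →ₗ[R] A := eK.symm.toLinearMap ∘ₗ
    (LinearMap.codRestrict (LinearMap.range k) (π ∘ₗ WA.subtype) (fun z => z.2)) with hpA
  have hkpA : ∀ z : WA, k (pA z) = π (z : W) := by
    intro z
    have h1 : eK (pA z) = ⟨π (z : W), z.2⟩ := by
      show eK (eK.symm _) = _
      rw [LinearEquiv.apply_symm_apply]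
      apply Subtype.ext
      rfl
    have h2 := congrArg (fun t : LinearMap.range k => (t : X)) h1
    rw [← hcoeK (pA z)]
    exact h2
  have hjAinj : Function.Injective jA := by
    intro a b hab
    exact hj (congrArg (fun z : WA => (z : W)) hab)
  have hpAsurj : Function.Surjective pA := by
    intro a
    obtain ⟨w, hw⟩ := hπ (k a)
    refine ⟨⟨w, ⟨a, hw.symm⟩⟩, ?_⟩
    apply eK.injective
    apply Subtype.ext
    rw [hcoeK]
    show k _ = k a
    rw [hkpA]
    exact hw
  have hexA : Function.Exact jA pA := by
    intro z
    constructor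
    · intro h0
      have h1 : π (z : W) = 0 := by rw [← hkpA z, h0, map_zero]
      obtain ⟨f, hf⟩ := (hexW _).mp h1
      exact ⟨f, Subtype.ext hf⟩
    · rintro ⟨f, rfl⟩
      apply hk
      rw [hkpA, map_zero]
      exact hπj f
  obtain ⟨sA, hsA⟩ := hA F hF WA jA pA hjAinj hpAsurj hexA
  set sA' : A →ₗ[R] W := WA.subtype ∘ₗ sA with hsA'
  have hπsA' : ∀ a, π (sA' a) = k a := by
    intro a
    show π ((sA a : W)) = k a
    rw [← hkpA (sA a)]
    congr 1
    exact LinearMap.congr_fun hsA a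
  -- Step 2: N = W ⧸ range sA', an extension of B by F
  set S : Submodule R W := LinearMap.range sA' with hS
  set jN : F →ₗ[R] W ⧸ S := S.mkQ ∘ₗ j with hjN
  have hle : S ≤ LinearMap.ker (r ∘ₗ π) := by
    rw [hS]
    rintro x ⟨a, rfl⟩
    apply LinearMap.mem_ker.mpr
    show r (π (sA' a)) = 0
    rw [hπsA', hrk]
  set πN : (W ⧸ S) →ₗ[R] B := S.liftQ (r ∘ₗ π) hle with hπN
  have hjN0 : ∀ f, jN f = 0 → f = 0 := by
    intro f hf
    have h1 : j f ∈ S := (Submodule.Quotient.mk_eq_zero _).mp hf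
    rw [hS] at h1
    obtain ⟨a, ha⟩ := h1
    have h2 : k a = 0 := by rw [← hπsA' a, ha, hπj]
    have h3 : a = 0 := hk (by rw [h2, map_zero])
    rw [h3, map_zero] at ha
    exact hj (by rw [← ha, map_zero])
  have hjNinj : Function.Injective jN := by
    intro a b hab
    have := hjN0 (a - b) (by rw [map_sub, hab, sub_self])
    exact sub_eq_zero.mp this
  have hπNsurj : Function.Surjective πN := by
    intro b
    obtain ⟨x, hx⟩ := hr b
    obtain ⟨w, hw⟩ := hπ x
    refine ⟨S.mkQ w, ?_⟩
    show r (π w) = b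
    rw [hw, hx]
  have hexN : Function.Exact jN πN := by
    intro y
    constructor
    · intro h0
      obtain ⟨w, rfl⟩ := Submodule.Quotient.mk_surjective S y
      have h1 : r (π w) = 0 := h0
      obtain ⟨a, ha⟩ := (hex _).mp h1
      have h2 : π (w - sA' a) = 0 := by rw [map_sub, hπsA', ha, sub_self]
      obtain ⟨f, hf⟩ := (hexW _).mp h2
      refine ⟨f, ?_⟩
      show Submodule.Quotient.mk (j f) = Submodule.Quotient.mk w
      rw [Submodule.Quotient.eq]
      rw [hf]
      refine ⟨-a, ?_⟩
      show sA' (-a) = w - sA' a - w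
      rw [map_neg]
      abel
    · rintro ⟨f, rfl⟩
      show r (π (j f)) = 0
      rw [hπj, map_zero]
  obtain ⟨sB, hsB⟩ := hB F hF (W ⧸ S) jN πN hjNinj hπNsurj hexN
  -- Step 3: V = preimage of range sB, a complement for the section
  set V : Submodule R W := Submodule.comap S.mkQ (LinearMap.range sB) with hV
  set πV : V →ₗ[R] X := π ∘ₗ V.subtype with hπV
  have hπV0 : ∀ v : V, πV v = 0 → v = 0 := by
    intro v hv
    obtain ⟨f, hf⟩ := (hexW _).mp (show π (v : W) = 0 from hv)
    have h1 : Submodule.Quotient.mk (j f) ∈ LinearMap.range sB := by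
      have hv2 : S.mkQ (v : W) ∈ LinearMap.range sB := v.2
      rw [← hf] at hv2
      exact hv2
    obtain ⟨b, hb⟩ := h1
    have h2 : b = 0 := by
      have h3 := LinearMap.congr_fun hsB b
      have h4 : πN (sB b) = b := h3
      rw [hb] at h4
      have h5 : πN (Submodule.Quotient.mk (j f)) = r (π (j f)) := rfl
      rw [h5, hπj, map_zero] at h4
      exact h4.symm
    rw [h2, map_zero] at hb
    have h6 : f = 0 := hjN0 f hb.symm
    apply Subtype.ext
    rw [← hf, h6, map_zero]
    simp
  have hπVinj : Function.Injective πV := by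
    intro a b hab
    have := hπV0 (a - b) (by rw [map_sub, hab, sub_self])
    exact sub_eq_zero.mp this
  have hπVsurj : Function.Surjective πV := by
    intro x
    obtain ⟨w0, hw0⟩ := Submodule.Quotient.mk_surjective S (sB (r x))
    have h1 : r (π w0) = r x := by
      have h2 : πN (Submodule.Quotient.mk w0) = r (π w0) := rfl
      rw [hw0] at h2
      have h3 : πN (sB (r x)) = r x := LinearMap.congr_fun hsB (r x)
      rw [h3] at h2
      exact h2.symm
    have h4 : r (π w0 - x) = 0 := by rw [map_sub, h1, sub_self]
    obtain ⟨a, ha⟩ := (hex _).mp h4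
    have h5 : (w0 - sA' a) ∈ V := by
      show S.mkQ (w0 - sA' a) ∈ LinearMap.range sB
      have h6 : S.mkQ (w0 - sA' a) = Submodule.Quotient.mk w0 := by
        show Submodule.Quotient.mk (w0 - sA' a) = Submodule.Quotient.mk w0
        rw [Submodule.Quotient.eq]
        exact ⟨-a, by rw [map_neg]; abel⟩
      rw [h6, hw0]
      exact ⟨r x, rfl⟩
    refine ⟨⟨w0 - sA' a, h5⟩, ?_⟩
    show π (w0 - sA' a) = x
    rw [map_sub, hπsA', ha]
    abel
  set e := LinearEquiv.ofBijective πV ⟨hπVinj, hπVsurj⟩ with he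
  refine ⟨V.subtype ∘ₗ e.symm.toLinearMap, ?_⟩
  apply LinearMap.ext; intro x
  show π ((e.symm x : W)) = x
  have h7 : πV (e.symm x) = x := by
    have := LinearEquiv.apply_symm_apply e x
    exact this
  exact h7

end DingWork
end SplitVanExt
section Towers
namespace DingWork

variable {R : Type u} [Ring R]

/-- One co-resolution step: `X` embeds in a `CP`-module with `Good` cokernel,
and maps from `X` to flat modules extend. -/
def StepDown (CP Good : ModuleCat.{u} R → Prop) (X : ModuleCat.{u} R) : Prop :=
  ∃ (Q Z : ModuleCat.{u} R) (i : (X : Type u) →ₗ[R] Q) (p : (Q : Type u) →ₗ[R] Z),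
    CP Q ∧ Function.Injective i ∧ Function.Surjective p ∧ Function.Exact i p ∧
    ExtProp (R := R) i ∧ Good Z

/-- One resolution step: `X` is covered by a `CP`-module with `Good` kernel,
and maps from the kernel to flat modules extend. -/
def StepUp (CP Good : ModuleCat.{u} R → Prop) (X : ModuleCat.{u} R) : Prop :=
  ∃ (Q Z : ModuleCat.{u} R) (i : (Z : Type u) →ₗ[R] Q) (p : (Q : Type u) →ₗ[R] X),
    CP Q ∧ Function.Injective i ∧ Function.Surjective p ∧ Function.Exact i p ∧
    ExtProp (R := R) i ∧ Good Z

def HasDown (CP : ModuleCat.{u} R → Prop) (X : ModuleCat.{u} R) : Prop :=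
  ∃ Good : ModuleCat.{u} R → Prop, Good X ∧ ∀ Y, Good Y → StepDown CP Good Y

def HasUp (CP : ModuleCat.{u} R → Prop) (X : ModuleCat.{u} R) : Prop :=
  ∃ Good : ModuleCat.{u} R → Prop, Good X ∧ ∀ Y, Good Y → StepUp CP Good Y

theorem stepDown_mono {CP G1 G2 : ModuleCat.{u} R → Prop} {X : ModuleCat.{u} R}
    (h : ∀ Y, G1 Y → G2 Y) (hs : StepDown CP G1 X) : StepDown CP G2 X := by
  obtain ⟨Q, Z, i, p, h1, h2, h3, h4, h5, h6⟩ := hs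
  exact ⟨Q, Z, i, p, h1, h2, h3, h4, h5, h Z h6⟩

theorem stepUp_mono {CP G1 G2 : ModuleCat.{u} R → Prop} {X : ModuleCat.{u} R}
    (h : ∀ Y, G1 Y → G2 Y) (hs : StepUp CP G1 X) : StepUp CP G2 X := by
  obtain ⟨Q, Z, i, p, h1, h2, h3, h4, h5, h6⟩ := hs
  exact ⟨Q, Z, i, p, h1, h2, h3, h4, h5, h Z h6⟩

theorem HasDown.step {CP : ModuleCat.{u} R → Prop} {X : ModuleCat.{u} R}
    (h : HasDown CP X) : StepDown CP (HasDown CP) X := by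
  obtain ⟨G, hX, hstep⟩ := h
  exact stepDown_mono (fun Y hY => ⟨G, hY, hstep⟩) (hstep X hX)

theorem HasUp.step {CP : ModuleCat.{u} R → Prop} {X : ModuleCat.{u} R}
    (h : HasUp CP X) : StepUp CP (HasUp CP) X := by
  obtain ⟨G, hX, hstep⟩ := h
  exact stepUp_mono (fun Y hY => ⟨G, hY, hstep⟩) (hstep X hX)

theorem hasDown_of_step {CP : ModuleCat.{u} R → Prop} {X : ModuleCat.{u} R}
    (h : StepDown CP (HasDown CP) X) : HasDown CP X := by
  refine ⟨fun Y => HasDown CP Y ∨ StepDown CP (HasDown CP) Y, Or.inr h, ?_⟩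
  rintro Y (hY | hY)
  · exact stepDown_mono (fun Z hZ => Or.inl hZ) hY.step
  · exact stepDown_mono (fun Z hZ => Or.inl hZ) hY

theorem hasUp_of_step {CP : ModuleCat.{u} R → Prop} {X : ModuleCat.{u} R}
    (h : StepUp CP (HasUp CP) X) : HasUp CP X := by
  refine ⟨fun Y => HasUp CP Y ∨ StepUp CP (HasUp CP) Y, Or.inr h, ?_⟩
  rintro Y (hY | hY)
  · exact stepUp_mono (fun Z hZ => Or.inl hZ) hY.step
  · exact stepUp_mono (fun Z hZ => Or.inl hZ) hY

theorem stepDown_of_equiv {CP G : ModuleCat.{u} R → Prop} {X Y : ModuleCat.{u} R}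
    (e : (Y : Type u) ≃ₗ[R] (X : Type u)) (h : StepDown CP G X) : StepDown CP G Y := by
  obtain ⟨Q, Z, i, p, h1, h2, h3, h4, h5, h6⟩ := h
  refine ⟨Q, Z, i ∘ₗ e.toLinearMap, p, h1, h2.comp e.injective, h3, ?_, ?_, h6⟩
  · intro q
    constructor
    · intro hq
      obtain ⟨x, hx⟩ := (h4 q).mp hq
      exact ⟨e.symm x, by show i (e (e.symm x)) = q; rw [e.apply_symm_apply]; exact hx⟩
    · rintro ⟨y, rfl⟩
      exact (h4 _).mpr ⟨e y, rfl⟩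
  · intro F _ _ hF φ
    obtain ⟨g, hg⟩ := h5 F hF (φ ∘ₗ e.symm.toLinearMap)
    refine ⟨g, ?_⟩
    apply LinearMap.ext; intro y
    have h7 : g (i (e y)) = φ (e.symm (e y)) := LinearMap.congr_fun hg (e y)
    rw [e.symm_apply_apply] at h7
    exact h7

theorem stepUp_of_equiv {CP G : ModuleCat.{u} R → Prop} {X Y : ModuleCat.{u} R}
    (e : (Y : Type u) ≃ₗ[R] (X : Type u)) (h : StepUp CP G X) : StepUp CP G Y := by
  obtain ⟨Q, Z, i, p, h1, h2, h3, h4, h5, h6⟩ := h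
  refine ⟨Q, Z, i, e.symm.toLinearMap ∘ₗ p, h1, h2, e.symm.surjective.comp h3, ?_, h5, h6⟩
  intro q
  constructor
  · intro hq
    have h7 : p q = 0 := by
      apply e.symm.injective
      rw [map_zero]
      exact hq
    exact (h4 q).mp h7
  · intro hq
    have h7 : p q = 0 := (h4 q).mpr hq
    show e.symm (p q) = 0
    rw [h7, map_zero]

theorem hasDown_of_equiv {CP : ModuleCat.{u} R → Prop} {X Y : ModuleCat.{u} R}
    (e : (Y : Type u) ≃ₗ[R] (X : Type u)) (h : HasDown CP X) : HasDown CP Y :=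
  hasDown_of_step (stepDown_of_equiv e h.step)

theorem hasUp_of_equiv {CP : ModuleCat.{u} R → Prop} {X Y : ModuleCat.{u} R}
    (e : (Y : Type u) ≃ₗ[R] (X : Type u)) (h : HasUp CP X) : HasUp CP Y :=
  hasUp_of_step (stepUp_of_equiv e h.step)

section ComplexTowers

variable (P : ℤ → ModuleCat.{u} R) (d : ∀ n : ℤ, (P (n + 1) : Type u) →ₗ[R] P n)

/-- Transport between cycle modules along an index equality. -/
noncomputable def castRange {m n : ℤ} (h : m = n) :
    (↥(LinearMap.range (d m))) ≃ₗ[R] (↥(LinearMap.range (d n))) := by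
  subst h; exact LinearEquiv.refl _ _

theorem complex_towers (CP : ModuleCat.{u} R → Prop) (hCP : ∀ n, CP (P n))
    (hex : ∀ n, Function.Exact (d (n + 1)) (d n))
    (hhom : ∀ (F : Type u) [AddCommGroup F] [Module R F], IsFlatModule R F →
      ∀ n : ℤ, Function.Exact (fun g : (P n : Type u) →ₗ[R] F => g ∘ₗ d n)
        (fun g : (P (n + 1) : Type u) →ₗ[R] F => g ∘ₗ d (n + 1)))
    (Y : ModuleCat.{u} R)
    (hY : ∃ j : ℤ, Nonempty ((Y : Type u) ≃ₗ[R] ↥(LinearMap.range (d (j + 1))))) :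
    HasUp CP Y ∧ HasDown CP Y := by
  have hker : ∀ n : ℤ, LinearMap.ker (d n) = LinearMap.range (d (n + 1)) :=
    fun n => LinearMap.exact_iff.mp (hex n)
  have hdd : ∀ (n : ℤ) x, d n (d (n + 1) x) = 0 := fun n x => (hex n _).mpr ⟨x, rfl⟩
  -- extension of maps from cycles to flat modules
  have hextP : ∀ (j : ℤ), ExtProp (R := R)
      ((LinearMap.range (d (j + 1))).subtype : _ →ₗ[R] (P (j + 1) : Type u)) := by
    intro j F _ _ hF φ
    set ψ : (P (j + 1 + 1) : Type u) →ₗ[R] F := φ ∘ₗ (d (j + 1)).rangeRestrict with hψ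
    have hψ0 : (fun g : (P (j + 1 + 1) : Type u) →ₗ[R] F => g ∘ₗ d (j + 1 + 1)) ψ = 0 := by
      show ψ ∘ₗ d (j + 1 + 1) = 0
      apply LinearMap.ext; intro x
      show φ ((d (j + 1)).rangeRestrict (d (j + 1 + 1) x)) = 0
      have h1 : (d (j + 1)).rangeRestrict (d (j + 1 + 1) x) = 0 := by
        apply Subtype.ext
        show d (j + 1) (d (j + 1 + 1) x) = 0
        exact hdd (j + 1) x
      rw [h1, map_zero]
    obtain ⟨h, hh⟩ := (hhom F hF (j + 1) ψ).mp hψ0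
    refine ⟨h, ?_⟩
    apply LinearMap.ext; intro z
    obtain ⟨x, hx⟩ := z.2
    show h (z : (P (j + 1) : Type u)) = φ z
    rw [← hx]
    have h2 : h (d (j + 1) x) = ψ x := LinearMap.congr_fun hh x
    rw [h2]
    show φ ((d (j + 1)).rangeRestrict x) = φ z
    congr 1
    exact Subtype.ext hx
  -- exactness of the cycle sequences
  have hexact : ∀ j : ℤ, Function.Exact
      ((LinearMap.range (d (j + 1))).subtype : _ →ₗ[R] (P (j + 1) : Type u))
      ((d j).rangeRestrict) := by
    intro j q
    constructor
    · intro h0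
      have h1 : d j q = 0 := congrArg Subtype.val h0
      have h2 : q ∈ LinearMap.range (d (j + 1)) := by
        rw [← hker]; exact LinearMap.mem_ker.mpr h1
      exact ⟨⟨q, h2⟩, rfl⟩
    · rintro ⟨y, rfl⟩
      apply Subtype.ext
      show d j (y : (P (j + 1) : Type u)) = 0
      have h3 : (y : (P (j + 1) : Type u)) ∈ LinearMap.ker (d j) := by
        rw [hker]; exact y.2
      exact h3
  set Good : ModuleCat.{u} R → Prop := fun Z =>
    ∃ j : ℤ, Nonempty ((Z : Type u) ≃ₗ[R] ↥(LinearMap.range (d (j + 1)))) with hGood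
  constructor
  · refine ⟨Good, hY, ?_⟩
    rintro Z ⟨j, ⟨e⟩⟩
    apply stepUp_of_equiv (X := ModuleCat.of R ↥(LinearMap.range (d (j + 1)))) e
    exact ⟨P (j + 1 + 1), ModuleCat.of R ↥(LinearMap.range (d (j + 1 + 1))),
      (LinearMap.range (d (j + 1 + 1))).subtype, (d (j + 1)).rangeRestrict,
      hCP _, Submodule.injective_subtype _, LinearMap.surjective_rangeRestrict _,
      hexact (j + 1), hextP (j + 1), ⟨j + 1, ⟨LinearEquiv.refl _ _⟩⟩⟩
  · refine ⟨Good, hY, ?_⟩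
    rintro Z ⟨j, ⟨e⟩⟩
    apply stepDown_of_equiv (X := ModuleCat.of R ↥(LinearMap.range (d (j + 1)))) e
    exact ⟨P (j + 1), ModuleCat.of R ↥(LinearMap.range (d j)),
      (LinearMap.range (d (j + 1))).subtype, (d j).rangeRestrict,
      hCP _, Submodule.injective_subtype _, LinearMap.surjective_rangeRestrict _,
      hexact j, hextP j, ⟨j - 1, ⟨castRange P d (show j = j - 1 + 1 by omega)⟩⟩⟩

end ComplexTowers

/-- Every Ding projective module has complete towers of projectives. -/
theorem ding_towers {X : ModuleCat.{u} R} (h : IsDingProjective R (X : Type u)) :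
    HasUp (fun Q : ModuleCat.{u} R => Module.Projective R (Q : Type u)) X ∧
      HasDown (fun Q : ModuleCat.{u} R => Module.Projective R (Q : Type u)) X := by
  obtain ⟨P, d, hproj, hex, hhom, ⟨e⟩⟩ := h
  apply complex_towers P d _ hproj hex hhom
  exact ⟨-1, ⟨e.trans (LinearEquiv.ofEq _ _ (LinearMap.exact_iff.mp (hex (-1))))⟩⟩

theorem splitVan_of_stepUp {CP G : ModuleCat.{u} R → Prop} {X : ModuleCat.{u} R}
    (h : StepUp CP G X)
    (hCP : ∀ Q : ModuleCat.{u} R, CP Q → SplitVan (R := R) (Q : Type u)) :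
    SplitVan (R := R) (X : Type u) := by
  obtain ⟨Q, Z, i, p, h1, h2, h3, h4, h5, _⟩ := h
  exact splitVan_of_presentation i p h2 h3 h4 h5 (hCP Q h1)

/-- Ding projective modules have vanishing `Ext¹` against flat modules. -/
theorem splitVan_of_ding {X : ModuleCat.{u} R} (h : IsDingProjective R (X : Type u)) :
    SplitVan (R := R) (X : Type u) :=
  splitVan_of_stepUp (ding_towers h).1.step
    (fun Q hQ => splitVan_of_projective (Q : Type u) hQ)

end DingWork
end Towers
section NiceSec
namespace DingWork

variable {R : Type u} [Ring R]

theorem inj_of_zero {A B : Type u} [AddCommGroup A] [Module R A] [AddCommGroup B] [Module R B]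
    {f : A →ₗ[R] B} (h : ∀ x, f x = 0 → x = 0) : Function.Injective f := fun a b hab =>
  sub_eq_zero.mp (h _ (by rw [map_sub, hab, sub_self]))

theorem exact_ker_subtype {A B : Type u} [AddCommGroup A] [Module R A] [AddCommGroup B]
    [Module R B] (f : A →ₗ[R] B) :
    Function.Exact (LinearMap.ker f).subtype f := by
  intro q
  constructor
  · intro hq
    exact ⟨⟨q, LinearMap.mem_ker.mpr hq⟩, rfl⟩
  · rintro ⟨z, rfl⟩
    exact LinearMap.mem_ker.mp z.2

theorem exact_subtype_mkQ {A : Type u} [AddCommGroup A] [Module R A] (S : Submodule R A) :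
    Function.Exact S.subtype S.mkQ := by
  intro q
  constructor
  · intro hq
    have h1 : q ∈ S := (Submodule.Quotient.mk_eq_zero S).mp hq
    exact ⟨⟨q, h1⟩, rfl⟩
  · rintro ⟨z, rfl⟩
    exact (Submodule.Quotient.mk_eq_zero S).mpr z.2

theorem extProp_comp {A B C : Type u} [AddCommGroup A] [Module R A] [AddCommGroup B]
    [Module R B] [AddCommGroup C] [Module R C] {i1 : A →ₗ[R] B} {i2 : B →ₗ[R] C}
    (h1 : ExtProp (R := R) i1) (h2 : ExtProp (R := R) i2) : ExtProp (R := R) (i2 ∘ₗ i1) := by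
  intro F _ _ hF φ
  obtain ⟨g1, hg1⟩ := h1 F hF φ
  obtain ⟨g2, hg2⟩ := h2 F hF g1
  refine ⟨g2, ?_⟩
  apply LinearMap.ext; intro a
  show g2 (i2 (i1 a)) = φ a
  rw [show g2 (i2 (i1 a)) = g1 (i1 a) from LinearMap.congr_fun hg2 (i1 a)]
  exact LinearMap.congr_fun hg1 a

def ProjCP (R : Type u) [Ring R] : ModuleCat.{u} R → Prop :=
  fun Q => Module.Projective R (Q : Type u)

def DingCP (R : Type u) [Ring R] : ModuleCat.{u} R → Prop :=
  fun Q => IsDingProjective R (Q : Type u)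

/-- The class of modules appearing in our construction of complete resolutions. -/
inductive Nice (R : Type u) [Ring R] : ModuleCat.{u} R → Prop
  | cyc {X : ModuleCat.{u} R} (hu : HasUp (ProjCP R) X) (hd : HasDown (ProjCP R) X) : Nice R X
  | kg {X : ModuleCat.{u} R} (hu : HasUp (DingCP R) X) (hd : HasDown (DingCP R) X) : Nice R X
  | ext {A X B : ModuleCat.{u} R} (k : (A : Type u) →ₗ[R] X) (r : (X : Type u) →ₗ[R] B)
      (hk : Function.Injective k) (hr : Function.Surjective r)
      (hex : Function.Exact k r) (hA : Nice R A) (hB : Nice R B) : Nice R X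

theorem Nice.splitVan {X : ModuleCat.{u} R} (h : Nice R X) :
    SplitVan (R := R) (X : Type u) := by
  induction h with
  | cyc hu hd => exact splitVan_of_stepUp hu.step (fun Q hQ => splitVan_of_projective _ hQ)
  | kg hu hd => exact splitVan_of_stepUp hu.step (fun Q hQ => splitVan_of_ding hQ)
  | ext k r hk hr hex hA hB ihA ihB => exact splitVan_ext k r hk hr hex ihA ihB

/-- The common kernel construction: if `π : Q ↠ X` and the kernel of `π` is an extension
of `A1` by `S` in the manner below, we get the exact structure on `ker π` together with
the extension property for `ker π ↪ Q`. -/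
theorem ker_ses {Q X S A1 C : Type u} [AddCommGroup Q] [Module R Q] [AddCommGroup X]
    [Module R X] [AddCommGroup S] [Module R S] [AddCommGroup A1] [Module R A1]
    [AddCommGroup C] [Module R C] (π : Q →ₗ[R] X)
    (u : S →ₗ[R] Q) (g : Q →ₗ[R] C) (a1 : A1 →ₗ[R] C)
    (hu : Function.Injective u) (ha1 : Function.Injective a1)
    (h1 : ∀ s, π (u s) = 0) (h2 : ∀ s, g (u s) = 0)
    (h3 : ∀ q, π q = 0 → g q ∈ LinearMap.range a1)
    (h4 : ∀ q, π q = 0 → g q = 0 → q ∈ Set.range u)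
    (h5 : ∀ a : A1, ∃ q, π q = 0 ∧ g q = a1 a)
    (hext1 : ∀ (F : Type u) [AddCommGroup F] [Module R F], IsFlatModule R F →
      ∀ φS : S →ₗ[R] F, ∃ h : Q →ₗ[R] F, h ∘ₗ u = φS)
    (hext2 : ∀ (F : Type u) [AddCommGroup F] [Module R F], IsFlatModule R F →
      ∀ θ : A1 →ₗ[R] F, ∃ h : Q →ₗ[R] F,
        ∀ (a : A1) (q : Q), g q = a1 a → h q = θ a) :
    ∃ (jS : S →ₗ[R] ↥(LinearMap.ker π)) (t : ↥(LinearMap.ker π) →ₗ[R] A1),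
      Function.Injective jS ∧ Function.Surjective t ∧ Function.Exact jS t ∧
      ExtProp (R := R) ((LinearMap.ker π).subtype) := by
  set jS : S →ₗ[R] ↥(LinearMap.ker π) :=
    LinearMap.codRestrict (LinearMap.ker π) u (fun s => LinearMap.mem_ker.mpr (h1 s)) with hjS
  set eA := LinearEquiv.ofInjective a1 ha1 with heA
  set t : ↥(LinearMap.ker π) →ₗ[R] A1 := eA.symm.toLinearMap ∘ₗ
    LinearMap.codRestrict (LinearMap.range a1) (g ∘ₗ (LinearMap.ker π).subtype)
      (fun z => h3 (z : Q) (LinearMap.mem_ker.mp z.2)) with ht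
  have ha1t : ∀ z : ↥(LinearMap.ker π), a1 (t z) = g (z : Q) := by
    intro z
    have hh : eA (t z) = ⟨g (z : Q), h3 _ (LinearMap.mem_ker.mp z.2)⟩ := by
      show eA (eA.symm _) = _
      rw [LinearEquiv.apply_symm_apply]
      apply Subtype.ext
      rfl
    have := congrArg (fun w : LinearMap.range a1 => (w : C)) hh
    exact this
  have hjSinj : Function.Injective jS := by
    intro a b hab
    exact hu (congrArg (fun z : ↥(LinearMap.ker π) => (z : Q)) hab)
  have htsurj : Function.Surjective t := by
    intro a
    obtain ⟨q, hq0, hqa⟩ := h5 a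
    refine ⟨⟨q, LinearMap.mem_ker.mpr hq0⟩, ?_⟩
    apply ha1
    rw [ha1t]
    exact hqa
  have hexZ : Function.Exact jS t := by
    intro z
    constructor
    · intro h0
      have hgz : g (z : Q) = 0 := by rw [← ha1t z, h0, map_zero]
      obtain ⟨s, hs⟩ := h4 _ (LinearMap.mem_ker.mp z.2) hgz
      exact ⟨s, Subtype.ext hs⟩
    · rintro ⟨s, rfl⟩
      apply ha1
      rw [ha1t, map_zero]
      exact h2 s
  refine ⟨jS, t, hjSinj, htsurj, hexZ, ?_⟩
  intro F _ _ hF φ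
  obtain ⟨e1, he1⟩ := hext1 F hF (φ ∘ₗ jS)
  set ψ : ↥(LinearMap.ker π) →ₗ[R] F := φ - e1 ∘ₗ (LinearMap.ker π).subtype with hψ
  have hψjS : ∀ s, ψ (jS s) = 0 := by
    intro s
    show φ (jS s) - e1 (u s) = 0
    rw [show e1 (u s) = φ (jS s) from LinearMap.congr_fun he1 s, sub_self]
  obtain ⟨θ, hθ⟩ := descend t htsurj ψ (by
    intro z hz
    obtain ⟨s, rfl⟩ := (hexZ z).mp hz
    exact hψjS s)
  obtain ⟨e2, he2⟩ := hext2 F hF θ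
  refine ⟨e1 + e2, ?_⟩
  apply LinearMap.ext; intro z
  show e1 (z : Q) + e2 (z : Q) = φ z
  have h6 : e2 (z : Q) = θ (t z) := he2 (t z) _ (ha1t z).symm
  have h7 : θ (t z) = ψ z := LinearMap.congr_fun hθ z
  rw [h6, h7]
  rw [add_comm]
  show (φ z - e1 (z : Q)) + e1 (z : Q) = φ z
  rw [sub_add_cancel]

end DingWork
end NiceSec
section N1Sec
namespace DingWork

variable {R : Type u} [Ring R]

theorem Nice.stepUp {X : ModuleCat.{u} R} (h : Nice R X) :
    StepUp (ProjCP R) (Nice R) X := by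
  induction h with
  | @cyc X hu hd =>
    obtain ⟨Q, Z, i, p, hQ, hi, hp, hex, hext, hZup⟩ := hu.step
    exact ⟨Q, Z, i, p, hQ, hi, hp, hex, hext,
      Nice.cyc hZup (hasDown_of_step ⟨Q, X, i, p, hQ, hi, hp, hex, hext, hd⟩)⟩
  | @kg X hu hd =>
    obtain ⟨E, A1, α, β, hE, hα, hβ, hexE, hextE, hA1up⟩ := hu.step
    obtain ⟨Qp, S, iS, pQ, hQp, hiS, hpQ, hexQ, hextS, hSup⟩ := (ding_towers hE).1.step
    set π : (Qp : Type u) →ₗ[R] X := β ∘ₗ pQ with hπdef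
    have hπsurj : Function.Surjective π := hβ.comp hpQ
    have hpQiS : ∀ s, pQ (iS s) = 0 := fun s => (hexQ (iS s)).mpr ⟨s, rfl⟩
    have hβα : ∀ a, β (α a) = 0 := fun a => (hexE (α a)).mpr ⟨a, rfl⟩
    obtain ⟨jS, t, hjSinj, htsurj, hexZ, hextZ⟩ := ker_ses π iS pQ α hiS hα
      (fun s => by show β (pQ (iS s)) = 0; rw [hpQiS s, map_zero])
      hpQiS
      (fun q hq => by
        obtain ⟨a, ha⟩ := (hexE (pQ q)).mp hq
        exact ⟨a, ha⟩)
      (fun q _ hgq => (hexQ q).mp hgq)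
      (fun a => by
        obtain ⟨q, hq⟩ := hpQ (α a)
        refine ⟨q, ?_, hq⟩
        show β (pQ q) = 0
        rw [hq, hβα])
      (fun F _ _ hF φS => hextS F hF φS)
      (fun F _ _ hF θ => by
        obtain ⟨χ, hχ⟩ := hextE F hF θ
        refine ⟨χ ∘ₗ pQ, fun a q hq => ?_⟩
        show χ (pQ q) = θ a
        rw [hq]
        exact LinearMap.congr_fun hχ a)
    refine ⟨Qp, ModuleCat.of R ↥(LinearMap.ker π), (LinearMap.ker π).subtype, π, hQp,
      Submodule.injective_subtype _, hπsurj, exact_ker_subtype π, hextZ, ?_⟩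
    exact Nice.ext jS t hjSinj htsurj hexZ
      (Nice.cyc hSup (hasDown_of_step
        ⟨Qp, E, iS, pQ, hQp, hiS, hpQ, hexQ, hextS, (ding_towers hE).2⟩))
      (Nice.kg hA1up (hasDown_of_step ⟨E, X, α, β, hE, hα, hβ, hexE, hextE, hd⟩))
  | @ext A X B k r hk hr hex hA hB ihA ihB =>
    obtain ⟨QA, ZA, iA, pA, hQA, hiA, hpA, hexA, hextA, hZA⟩ := ihA
    obtain ⟨QB, ZB, iB, pB, hQB, hiB, hpB, hexB, hextB, hZB⟩ := ihB
    haveI : Module.Projective R (QB : Type u) := hQB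
    obtain ⟨hlift, hhlift⟩ := Module.projective_lifting_property r pB hr
    set π : (↑QA × ↑QB : Type u) →ₗ[R] X :=
      k ∘ₗ pA ∘ₗ LinearMap.fst R (QA : Type u) (QB : Type u)
        + hlift ∘ₗ LinearMap.snd R (QA : Type u) (QB : Type u) with hπdef
    have hπapp : ∀ q : (↑QA × ↑QB : Type u),
        π q = k (pA q.1) + hlift q.2 := fun q => rfl
    have hrh : ∀ qb, r (hlift qb) = pB qb := fun qb => LinearMap.congr_fun hhlift qb
    have hpAiA : ∀ za, pA (iA za) = 0 := fun za => (hexA (iA za)).mpr ⟨za, rfl⟩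
    have hpBiB : ∀ zb, pB (iB zb) = 0 := fun zb => (hexB (iB zb)).mpr ⟨zb, rfl⟩
    have hrk : ∀ a, r (k a) = 0 := fun a => (hex (k a)).mpr ⟨a, rfl⟩
    have hπsurj : Function.Surjective π := by
      intro x
      obtain ⟨qb, hqb⟩ := hpB (r x)
      have h1 : r (x - hlift qb) = 0 := by rw [map_sub, hrh, hqb, sub_self]
      obtain ⟨a, ha⟩ := (hex _).mp h1
      obtain ⟨qa, hqa⟩ := hpA a
      refine ⟨(qa, qb), ?_⟩
      rw [hπapp, hqa, ha]
      abel
    set uZA : (ZA : Type u) →ₗ[R] (↑QA × ↑QB : Type u) :=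
      LinearMap.prod iA 0 with huZA
    obtain ⟨jS, t, hjSinj, htsurj, hexZ, hextZ⟩ := ker_ses π uZA
      (LinearMap.snd R (QA : Type u) (QB : Type u)) iB
      (fun a b hab => hiA (congrArg Prod.fst hab))
      hiB
      (fun za => by
        show k (pA (iA za)) + hlift 0 = 0
        rw [hpAiA, map_zero, map_zero, add_zero])
      (fun za => rfl)
      (fun q hq => by
        have h2 : r (π q) = 0 := by rw [hq, map_zero]
        rw [hπapp, map_add, hrk, zero_add, hrh] at h2
        obtain ⟨zb, hzb⟩ := (hexB q.2).mp h2
        exact ⟨zb, hzb⟩)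
      (fun q hq hsnd => by
        have hsnd' : q.2 = 0 := hsnd
        have hq' : π q = 0 := hq
        rw [hπapp, hsnd', map_zero, add_zero] at hq'
        have h2 : pA q.1 = 0 := hk (by rw [hq', map_zero])
        obtain ⟨za, hza⟩ := (hexA q.1).mp h2
        refine ⟨za, ?_⟩
        show ((iA za, (0 : (QB : Type u))) : (↑QA × ↑QB : Type u)) = q
        have : ((q.1, q.2) : (↑QA × ↑QB : Type u)) = q := rfl
        rw [← this, hza, hsnd']
        )
      (fun zb => by
        have h1 : r (-(hlift (iB zb))) = 0 := by rw [map_neg, hrh, hpBiB, neg_zero]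
        obtain ⟨a, ha⟩ := (hex _).mp h1
        obtain ⟨qa, hqa⟩ := hpA a
        refine ⟨(qa, iB zb), ?_, rfl⟩
        rw [hπapp]
        show k (pA qa) + hlift (iB zb) = 0
        rw [hqa, ha]
        abel)
      (fun F _ _ hF φS => by
        obtain ⟨hA1, hhA1⟩ := hextA F hF φS
        refine ⟨hA1 ∘ₗ LinearMap.fst R (QA : Type u) (QB : Type u), ?_⟩
        apply LinearMap.ext; intro za
        show hA1 (iA za) = φS za
        exact LinearMap.congr_fun hhA1 za)
      (fun F _ _ hF θ => by
        obtain ⟨hB1, hhB1⟩ := hextB F hF θ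
        refine ⟨hB1 ∘ₗ LinearMap.snd R (QA : Type u) (QB : Type u), fun a q hq => ?_⟩
        show hB1 ((LinearMap.snd R (QA : Type u) (QB : Type u)) q) = θ a
        rw [hq]
        exact LinearMap.congr_fun hhB1 a)
    refine ⟨ModuleCat.of R (↑QA × ↑QB : Type u),
      ModuleCat.of R ↥(LinearMap.ker π), (LinearMap.ker π).subtype, π,
      ?_, Submodule.injective_subtype _, hπsurj, exact_ker_subtype π, hextZ, ?_⟩
    · haveI : Module.Projective R (QA : Type u) := hQA
      show Module.Projective R (↑QA × ↑QB : Type u)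
      infer_instance
    · exact Nice.ext jS t hjSinj htsurj hexZ hZA hZB

end DingWork
end N1Sec
section N2Sec
namespace DingWork

variable {R : Type u} [Ring R]

theorem Nice.stepDown {X : ModuleCat.{u} R} (h : Nice R X) :
    StepDown (ProjCP R) (Nice R) X := by
  induction h with
  | @cyc X hu hd =>
    obtain ⟨Q, N', i, p, hQ, hi, hp, hex, hext, hN'down⟩ := hd.step
    exact ⟨Q, N', i, p, hQ, hi, hp, hex, hext,
      Nice.cyc (hasUp_of_step ⟨Q, X, i, p, hQ, hi, hp, hex, hext, hu⟩) hN'down⟩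
  | @kg X hu hd =>
    obtain ⟨E', B1, α', β', hE', hα', hβ', hexE', hextE', hB1down⟩ := hd.step
    obtain ⟨Pp, C', iE, pC, hPp, hiE, hpC, hexPC, hextEP, hC'down⟩ := (ding_towers hE').2.step
    set ι : (X : Type u) →ₗ[R] Pp := iE ∘ₗ α' with hι
    have hιinj : Function.Injective ι := hiE.comp hα'
    have hpCiE : ∀ e', pC (iE e') = 0 := fun e' => (hexPC (iE e')).mpr ⟨e', rfl⟩
    have hβ'α' : ∀ x, β' (α' x) = 0 := fun x => (hexE' (α' x)).mpr ⟨x, rfl⟩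
    set Sι : Submodule R (Pp : Type u) := LinearMap.range ι with hSι
    obtain ⟨uB, huB⟩ := descend β' hβ' (Sι.mkQ ∘ₗ iE) (by
      intro e' he'
      obtain ⟨x, hx⟩ := (hexE' e').mp he'
      show Submodule.Quotient.mk (iE e') = 0
      rw [Submodule.Quotient.mk_eq_zero]
      exact ⟨x, by show iE (α' x) = iE e'; rw [hx]⟩)
    have huBapp : ∀ e', uB (β' e') = Submodule.Quotient.mk (iE e') :=
      fun e' => LinearMap.congr_fun huB e'
    have huBinj : Function.Injective uB := inj_of_zero (by
      intro b hb
      obtain ⟨e', rfl⟩ := hβ' b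
      have h1 : iE e' ∈ Sι := by
        rw [← Submodule.Quotient.mk_eq_zero]
        rw [← huBapp]
        exact hb
      obtain ⟨x, hx⟩ := h1
      have h2 : α' x = e' := hiE hx
      rw [← h2, hβ'α'])
    have hle : Sι ≤ LinearMap.ker pC := by
      rintro q ⟨x, rfl⟩
      apply LinearMap.mem_ker.mpr
      show pC (iE (α' x)) = 0
      exact hpCiE (α' x)
    set w : ((Pp : Type u) ⧸ Sι) →ₗ[R] C' := Sι.liftQ pC hle with hw
    have hwsurj : Function.Surjective w := by
      intro c
      obtain ⟨q, hq⟩ := hpC c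
      exact ⟨Submodule.Quotient.mk q, hq⟩
    have hexN : Function.Exact uB w := by
      intro y
      constructor
      · intro h0
        obtain ⟨q, rfl⟩ := Submodule.Quotient.mk_surjective Sι y
        have h1 : pC q = 0 := h0
        obtain ⟨e', he'⟩ := (hexPC q).mp h1
        exact ⟨β' e', by rw [huBapp, he']⟩
      · rintro ⟨b, rfl⟩
        obtain ⟨e', rfl⟩ := hβ' b
        show w (uB (β' e')) = 0
        rw [huBapp]
        show pC (iE e') = 0
        exact hpCiE e'
    refine ⟨Pp, ModuleCat.of R ((Pp : Type u) ⧸ Sι), ι, Sι.mkQ, hPp, hιinj,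
      Submodule.mkQ_surjective Sι, ?_, extProp_comp hextE' hextEP, ?_⟩
    · intro q
      constructor
      · intro hq
        obtain ⟨x, hx⟩ := (Submodule.Quotient.mk_eq_zero Sι).mp hq
        exact ⟨x, hx⟩
      · rintro ⟨x, rfl⟩
        show Submodule.Quotient.mk (ι x) = (0 : (Pp : Type u) ⧸ Sι)
        rw [Submodule.Quotient.mk_eq_zero]
        exact ⟨x, rfl⟩
    · exact Nice.ext uB w huBinj hwsurj hexN
        (Nice.kg (hasUp_of_step ⟨E', X, α', β', hE', hα', hβ', hexE', hextE', hu⟩) hB1down)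
        (Nice.cyc (hasUp_of_step
          ⟨Pp, E', iE, pC, hPp, hiE, hpC, hexPC, hextEP, (ding_towers hE').1⟩) hC'down)
  | @ext A X B k r hk hr hex hA hB ihA ihB =>
    obtain ⟨QA, NA, jA, qA, hQA, hjA, hqA, hexA', hextA', hNA⟩ := ihA
    obtain ⟨QB, NB, jB, qB, hQB, hjB, hqB, hexB', hextB', hNB⟩ := ihB
    have hrk : ∀ a, r (k a) = 0 := fun a => (hex (k a)).mpr ⟨a, rfl⟩
    have hqAjA : ∀ a, qA (jA a) = 0 := fun a => (hexA' (jA a)).mpr ⟨a, rfl⟩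
    have hqBjB : ∀ b, qB (jB b) = 0 := fun b => (hexB' (jB b)).mpr ⟨b, rfl⟩
    have hflatQA : IsFlatModule R (QA : Type u) := isFlatModule_of_projective _ hQA
    obtain ⟨g, hg⟩ := extProp_of_splitVan k r hk hr hex hB.splitVan (QA : Type u) hflatQA jA
    have hgapp : ∀ a, g (k a) = jA a := fun a => LinearMap.congr_fun hg a
    set ι : (X : Type u) →ₗ[R] (↑QA × ↑QB : Type u) := LinearMap.prod g (jB ∘ₗ r) with hι
    have hιinj : Function.Injective ι := inj_of_zero (by
      intro x hx
      have h1 : jB (r x) = 0 := congrArg Prod.snd hx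
      have h2 : r x = 0 := hjB (by rw [h1, map_zero])
      obtain ⟨a, ha⟩ := (hex x).mp h2
      have h3 : g x = 0 := congrArg Prod.fst hx
      rw [← ha, hgapp] at h3
      have h4 : a = 0 := hjA (by rw [h3, map_zero])
      rw [← ha, h4, map_zero])
    set Sι : Submodule R (↑QA × ↑QB : Type u) := LinearMap.range ι with hSι
    obtain ⟨uA, huA⟩ := descend qA hqA
      (Sι.mkQ ∘ₗ LinearMap.inl R (QA : Type u) (QB : Type u)) (by
      intro q hq0
      obtain ⟨a, ha⟩ := (hexA' q).mp hq0
      show Submodule.Quotient.mk ((q, 0) : (↑QA × ↑QB : Type u)) = 0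
      rw [Submodule.Quotient.mk_eq_zero]
      refine ⟨k a, ?_⟩
      show ((g (k a), jB (r (k a))) : (↑QA × ↑QB : Type u)) = (q, 0)
      rw [hgapp, ha, hrk, map_zero])
    have huAapp : ∀ q, uA (qA q) =
        Submodule.Quotient.mk ((q, 0) : (↑QA × ↑QB : Type u)) :=
      fun q => LinearMap.congr_fun huA q
    have huAinj : Function.Injective uA := inj_of_zero (by
      intro b hb
      obtain ⟨q, rfl⟩ := hqA b
      have h1 : ((q, (0 : (QB : Type u))) : (↑QA × ↑QB : Type u)) ∈ Sι := by
        rw [← Submodule.Quotient.mk_eq_zero]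
        rw [← huAapp]
        exact hb
      obtain ⟨x, hx⟩ := h1
      have h2 : jB (r x) = 0 := congrArg Prod.snd hx
      have h3 : r x = 0 := hjB (by rw [h2, map_zero])
      obtain ⟨a, ha⟩ := (hex x).mp h3
      have h4 : g x = q := congrArg Prod.fst hx
      rw [← ha, hgapp] at h4
      rw [← h4, hqAjA])
    have hle : Sι ≤ LinearMap.ker (qB ∘ₗ LinearMap.snd R (QA : Type u) (QB : Type u)) := by
      rintro z ⟨x, rfl⟩
      apply LinearMap.mem_ker.mpr
      show qB (jB (r x)) = 0
      exact hqBjB (r x)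
    set w : ((↑QA × ↑QB : Type u) ⧸ Sι) →ₗ[R] NB :=
      Sι.liftQ (qB ∘ₗ LinearMap.snd R (QA : Type u) (QB : Type u)) hle with hw
    have hwsurj : Function.Surjective w := by
      intro c
      obtain ⟨q2, hq2⟩ := hqB c
      exact ⟨Submodule.Quotient.mk (((0 : (QA : Type u)), q2) : (↑QA × ↑QB : Type u)), hq2⟩
    have hexN : Function.Exact uA w := by
      intro y
      constructor
      · intro h0
        obtain ⟨z, rfl⟩ := Submodule.Quotient.mk_surjective Sι y
        have h1 : qB z.2 = 0 := h0
        obtain ⟨b, hb⟩ := (hexB' z.2).mp h1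
        obtain ⟨x, hbx⟩ := hr b
        refine ⟨qA (z.1 - g x), ?_⟩
        rw [huAapp, Submodule.Quotient.eq]
        refine ⟨-x, ?_⟩
        have h2 : ι (-x) = ((-(g x), -z.2) : (↑QA × ↑QB : Type u)) := by
          have h3 : ι (-x) = ((g (-x), jB (r (-x))) : (↑QA × ↑QB : Type u)) := rfl
          rw [h3, map_neg g, map_neg r, map_neg jB, hbx, hb]
        rw [h2]
        have h4 : ((z.1 - g x, (0 : (QB : Type u))) : (↑QA × ↑QB : Type u)) - z
            = ((z.1 - g x - z.1, 0 - z.2) : (↑QA × ↑QB : Type u)) := rfl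
        rw [h4]
        have h5 : z.1 - g x - z.1 = -(g x) := by abel
        rw [h5, zero_sub]
      · rintro ⟨b, rfl⟩
        obtain ⟨q, rfl⟩ := hqA b
        show w (uA (qA q)) = 0
        rw [huAapp]
        show qB (0 : (QB : Type u)) = 0
        exact map_zero qB
    refine ⟨ModuleCat.of R (↑QA × ↑QB : Type u),
      ModuleCat.of R ((↑QA × ↑QB : Type u) ⧸ Sι), ι, Sι.mkQ,
      ?_, hιinj, Submodule.mkQ_surjective Sι, ?_, ?_, ?_⟩
    · haveI : Module.Projective R (QA : Type u) := hQA
      haveI : Module.Projective R (QB : Type u) := hQB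
      show Module.Projective R (↑QA × ↑QB : Type u)
      infer_instance
    · intro q
      constructor
      · intro hq
        obtain ⟨x, hx⟩ := (Submodule.Quotient.mk_eq_zero Sι).mp hq
        exact ⟨x, hx⟩
      · rintro ⟨x, rfl⟩
        show Submodule.Quotient.mk (ι x) = (0 : ((↑QA × ↑QB : Type u) ⧸ Sι))
        rw [Submodule.Quotient.mk_eq_zero]
        exact ⟨x, rfl⟩
    · intro F _ _ hF φ
      obtain ⟨e1, he1⟩ := hextA' F hF (φ ∘ₗ k)
      set ψ : (X : Type u) →ₗ[R] F := φ - e1 ∘ₗ g with hψ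
      have hψk : ∀ a, ψ (k a) = 0 := by
        intro a
        show φ (k a) - e1 (g (k a)) = 0
        rw [hgapp, show e1 (jA a) = φ (k a) from LinearMap.congr_fun he1 a, sub_self]
      obtain ⟨θ, hθ⟩ := descend r hr ψ (by
        intro x hx0
        obtain ⟨a, ha⟩ := (hex x).mp hx0
        rw [← ha]; exact hψk a)
      obtain ⟨e2, he2⟩ := hextB' F hF θ
      refine ⟨e1 ∘ₗ LinearMap.fst R (QA : Type u) (QB : Type u)
        + e2 ∘ₗ LinearMap.snd R (QA : Type u) (QB : Type u), ?_⟩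
      apply LinearMap.ext; intro x
      show e1 (g x) + e2 (jB (r x)) = φ x
      rw [show e2 (jB (r x)) = θ (r x) from LinearMap.congr_fun he2 (r x),
        show θ (r x) = ψ x from LinearMap.congr_fun hθ x]
      show e1 (g x) + (φ x - e1 (g x)) = φ x
      rw [add_comm, sub_add_cancel]
    · exact Nice.ext uA w huAinj hwsurj hexN hNA hNB

end DingWork
end N2Sec
section AssemblySec
namespace DingWork

variable {R : Type u} [Ring R]

theorem exact_comp_helper {W X Y Z V : Type u} [AddCommGroup W] [Module R W]
    [AddCommGroup X] [Module R X] [AddCommGroup Y] [Module R Y] [AddCommGroup Z] [Module R Z]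
    [AddCommGroup V] [Module R V] (p : W →ₗ[R] X) (i : X →ₗ[R] Y) (p' : Y →ₗ[R] Z)
    (i' : Z →ₗ[R] V) (hp : Function.Surjective p) (hi' : Function.Injective i')
    (hex : Function.Exact i p') :
    Function.Exact (i ∘ₗ p) (i' ∘ₗ p') := by
  intro y
  constructor
  · intro h0
    have h1 : p' y = 0 := hi' (by
      rw [map_zero]
      exact h0)
    obtain ⟨x, hx⟩ := (hex y).mp h1
    obtain ⟨w, hw⟩ := hp x
    exact ⟨w, by show i (p w) = y; rw [hw, hx]⟩
  · rintro ⟨w, rfl⟩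
    show i' (p' (i (p w))) = 0
    rw [(hex (i (p w))).mpr ⟨p w, rfl⟩, map_zero]

theorem homexact_helper {W X Y Z V : Type u} [AddCommGroup W] [Module R W]
    [AddCommGroup X] [Module R X] [AddCommGroup Y] [Module R Y] [AddCommGroup Z] [Module R Z]
    [AddCommGroup V] [Module R V] (p : W →ₗ[R] X) (i : X →ₗ[R] Y) (p' : Y →ₗ[R] Z)
    (i' : Z →ₗ[R] V) (hp : Function.Surjective p) (hp' : Function.Surjective p')
    (hex : Function.Exact i p') (hext : ExtProp (R := R) i')
    (F : Type u) [AddCommGroup F] [Module R F] (hF : IsFlatModule R F) :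
    Function.Exact (fun g : V →ₗ[R] F => g ∘ₗ (i' ∘ₗ p'))
      (fun g : Y →ₗ[R] F => g ∘ₗ (i ∘ₗ p)) := by
  intro ψ
  constructor
  · intro h0
    have h1 : ∀ x, ψ (i x) = 0 := by
      intro x
      obtain ⟨w, hw⟩ := hp x
      rw [← hw]
      exact LinearMap.congr_fun h0 w
    obtain ⟨θ, hθ⟩ := descend p' hp' ψ (by
      intro y hy
      obtain ⟨x, rfl⟩ := (hex y).mp hy
      exact h1 x)
    obtain ⟨h, hh⟩ := hext F hF θ
    refine ⟨h, ?_⟩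
    show h ∘ₗ (i' ∘ₗ p') = ψ
    apply LinearMap.ext; intro y
    show h (i' (p' y)) = ψ y
    rw [show h (i' (p' y)) = θ (p' y) from LinearMap.congr_fun hh (p' y)]
    exact LinearMap.congr_fun hθ y
  · rintro ⟨h, rfl⟩
    show (h ∘ₗ (i' ∘ₗ p')) ∘ₗ (i ∘ₗ p) = 0
    apply LinearMap.ext; intro w
    show h (i' (p' (i (p w)))) = 0
    rw [(hex (i (p w))).mpr ⟨p w, rfl⟩, map_zero, map_zero]

structure UpData (X : ModuleCat.{u} R) where
  Q : ModuleCat.{u} R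
  Z : ModuleCat.{u} R
  i : (Z : Type u) →ₗ[R] Q
  p : (Q : Type u) →ₗ[R] X
  proj : Module.Projective R (Q : Type u)
  inj : Function.Injective i
  surj : Function.Surjective p
  exa : Function.Exact i p
  ext : ExtProp (R := R) i
  nice : Nice R Z

structure DownData (X : ModuleCat.{u} R) where
  Q : ModuleCat.{u} R
  Z : ModuleCat.{u} R
  i : (X : Type u) →ₗ[R] Q
  p : (Q : Type u) →ₗ[R] Z
  proj : Module.Projective R (Q : Type u)
  inj : Function.Injective i
  surj : Function.Surjective p
  exa : Function.Exact i p
  ext : ExtProp (R := R) i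
  nice : Nice R Z

noncomputable def pickUp {X : ModuleCat.{u} R} (h : Nice R X) : UpData X :=
  Classical.choice (by
    obtain ⟨Q, Z, i, p, h1, h2, h3, h4, h5, h6⟩ := h.stepUp
    exact ⟨⟨Q, Z, i, p, h1, h2, h3, h4, h5, h6⟩⟩)

noncomputable def pickDown {X : ModuleCat.{u} R} (h : Nice R X) : DownData X :=
  Classical.choice (by
    obtain ⟨Q, Z, i, p, h1, h2, h3, h4, h5, h6⟩ := h.stepDown
    exact ⟨⟨Q, Z, i, p, h1, h2, h3, h4, h5, h6⟩⟩)

variable (X0 : ModuleCat.{u} R) (h0 : Nice R X0)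

noncomputable def upChain : ℕ → Σ' (X : ModuleCat.{u} R), Nice R X
  | 0 => ⟨X0, h0⟩
  | n + 1 => ⟨(pickUp (upChain n).2).Z, (pickUp (upChain n).2).nice⟩

noncomputable def downChain : ℕ → Σ' (X : ModuleCat.{u} R), Nice R X
  | 0 => ⟨X0, h0⟩
  | n + 1 => ⟨(pickDown (downChain n).2).Z, (pickDown (downChain n).2).nice⟩

noncomputable def UZ (n : ℕ) : ModuleCat.{u} R := (upChain X0 h0 n).1
noncomputable def uStep (n : ℕ) : UpData (UZ X0 h0 n) := pickUp (upChain X0 h0 n).2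
noncomputable def UQ (n : ℕ) : ModuleCat.{u} R := (uStep X0 h0 n).Q
noncomputable def Ui (n : ℕ) : (UZ X0 h0 (n + 1) : Type u) →ₗ[R] UQ X0 h0 n :=
  (uStep X0 h0 n).i
noncomputable def Up (n : ℕ) : (UQ X0 h0 n : Type u) →ₗ[R] UZ X0 h0 n :=
  (uStep X0 h0 n).p

noncomputable def DZ (n : ℕ) : ModuleCat.{u} R := (downChain X0 h0 n).1
noncomputable def dStep (n : ℕ) : DownData (DZ X0 h0 n) := pickDown (downChain X0 h0 n).2
noncomputable def DQ (n : ℕ) : ModuleCat.{u} R := (dStep X0 h0 n).Q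
noncomputable def Di (n : ℕ) : (DZ X0 h0 n : Type u) →ₗ[R] DQ X0 h0 n :=
  (dStep X0 h0 n).i
noncomputable def Dp (n : ℕ) : (DQ X0 h0 n : Type u) →ₗ[R] DZ X0 h0 (n + 1) :=
  (dStep X0 h0 n).p

noncomputable def bigP : ℤ → ModuleCat.{u} R
  | Int.ofNat 0 => DQ X0 h0 0
  | Int.ofNat (k + 1) => UQ X0 h0 k
  | Int.negSucc k => DQ X0 h0 (k + 1)

noncomputable def bigD : ∀ n : ℤ, (bigP X0 h0 (n + 1) : Type u) →ₗ[R] bigP X0 h0 n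
  | Int.ofNat 0 => Di X0 h0 0 ∘ₗ Up X0 h0 0
  | Int.ofNat (k + 1) => Ui X0 h0 k ∘ₗ Up X0 h0 (k + 1)
  | Int.negSucc 0 => Di X0 h0 1 ∘ₗ Dp X0 h0 0
  | Int.negSucc (k + 1) => Di X0 h0 (k + 2) ∘ₗ Dp X0 h0 (k + 1)

theorem bigP_proj : ∀ n : ℤ, Module.Projective R (bigP X0 h0 n : Type u) := by
  intro n
  match n with
  | Int.ofNat 0 => exact (dStep X0 h0 0).proj
  | Int.ofNat (k + 1) => exact (uStep X0 h0 k).proj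
  | Int.negSucc k => exact (dStep X0 h0 (k + 1)).proj

theorem bigD_exact : ∀ n : ℤ,
    Function.Exact (bigD X0 h0 (n + 1)) (bigD X0 h0 n) := by
  intro n
  match n with
  | Int.ofNat 0 =>
    exact exact_comp_helper (Up X0 h0 1) (Ui X0 h0 0) (Up X0 h0 0) (Di X0 h0 0)
      (uStep X0 h0 1).surj (dStep X0 h0 0).inj (uStep X0 h0 0).exa
  | Int.ofNat (k + 1) =>
    exact exact_comp_helper (Up X0 h0 (k + 2)) (Ui X0 h0 (k + 1)) (Up X0 h0 (k + 1))
      (Ui X0 h0 k) (uStep X0 h0 (k + 2)).surj (uStep X0 h0 k).inj (uStep X0 h0 (k + 1)).exa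
  | Int.negSucc 0 =>
    exact exact_comp_helper (Up X0 h0 0) (Di X0 h0 0) (Dp X0 h0 0) (Di X0 h0 1)
      (uStep X0 h0 0).surj (dStep X0 h0 1).inj (dStep X0 h0 0).exa
  | Int.negSucc 1 =>
    exact exact_comp_helper (Dp X0 h0 0) (Di X0 h0 1) (Dp X0 h0 1)
      (Di X0 h0 2) (dStep X0 h0 0).surj (dStep X0 h0 2).inj
      (dStep X0 h0 1).exa
  | Int.negSucc (k + 2) =>
    exact exact_comp_helper (Dp X0 h0 (k + 1)) (Di X0 h0 (k + 2)) (Dp X0 h0 (k + 2))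
      (Di X0 h0 (k + 3)) (dStep X0 h0 (k + 1)).surj (dStep X0 h0 (k + 3)).inj
      (dStep X0 h0 (k + 2)).exa

theorem bigD_homexact : ∀ (F : Type u) [AddCommGroup F] [Module R F], IsFlatModule R F →
    ∀ n : ℤ, Function.Exact
      (fun g : (bigP X0 h0 n : Type u) →ₗ[R] F => g ∘ₗ bigD X0 h0 n)
      (fun g : (bigP X0 h0 (n + 1) : Type u) →ₗ[R] F => g ∘ₗ bigD X0 h0 (n + 1)) := by
  intro F _ _ hF n
  match n with
  | Int.ofNat 0 =>
    exact homexact_helper (Up X0 h0 1) (Ui X0 h0 0) (Up X0 h0 0) (Di X0 h0 0)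
      (uStep X0 h0 1).surj (uStep X0 h0 0).surj (uStep X0 h0 0).exa (dStep X0 h0 0).ext F hF
  | Int.ofNat (k + 1) =>
    exact homexact_helper (Up X0 h0 (k + 2)) (Ui X0 h0 (k + 1)) (Up X0 h0 (k + 1))
      (Ui X0 h0 k) (uStep X0 h0 (k + 2)).surj (uStep X0 h0 (k + 1)).surj
      (uStep X0 h0 (k + 1)).exa (uStep X0 h0 k).ext F hF
  | Int.negSucc 0 =>
    exact homexact_helper (Up X0 h0 0) (Di X0 h0 0) (Dp X0 h0 0) (Di X0 h0 1)
      (uStep X0 h0 0).surj (dStep X0 h0 0).surj (dStep X0 h0 0).exa (dStep X0 h0 1).ext F hF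
  | Int.negSucc 1 =>
    exact homexact_helper (Dp X0 h0 0) (Di X0 h0 1) (Dp X0 h0 1)
      (Di X0 h0 2) (dStep X0 h0 0).surj (dStep X0 h0 1).surj
      (dStep X0 h0 1).exa (dStep X0 h0 2).ext F hF
  | Int.negSucc (k + 2) =>
    exact homexact_helper (Dp X0 h0 (k + 1)) (Di X0 h0 (k + 2)) (Dp X0 h0 (k + 2))
      (Di X0 h0 (k + 3)) (dStep X0 h0 (k + 1)).surj (dStep X0 h0 (k + 2)).surj
      (dStep X0 h0 (k + 2)).exa (dStep X0 h0 (k + 3)).ext F hF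

theorem bigD_ker : LinearMap.ker (bigD X0 h0 (-1)) = LinearMap.range (Di X0 h0 0) := by
  ext q
  rw [LinearMap.mem_ker]
  refine Iff.trans ?_ (LinearMap.mem_range (f := Di X0 h0 0) (x := q)).symm
  constructor
  · intro hq
    have h1 : Di X0 h0 1 (Dp X0 h0 0 q) = 0 := hq
    have h2 : Dp X0 h0 0 q = 0 := (dStep X0 h0 1).inj (by
      show Di X0 h0 1 (Dp X0 h0 0 q) = Di X0 h0 1 0
      rw [h1, map_zero])
    obtain ⟨x, hx⟩ := ((dStep X0 h0 0).exa q).mp h2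
    exact ⟨x, hx⟩
  · rintro ⟨x, rfl⟩
    show Di X0 h0 1 (Dp X0 h0 0 (Di X0 h0 0 x)) = 0
    have hzz : Dp X0 h0 0 (Di X0 h0 0 x) = 0 := ((dStep X0 h0 0).exa (Di X0 h0 0 x)).mpr ⟨x, rfl⟩
    rw [hzz, map_zero]

/-- The main construction: a `Nice` module is Ding projective. -/
theorem Nice.isDingProjective {X0 : ModuleCat.{u} R} (h0 : Nice R X0) :
    IsDingProjective R (X0 : Type u) := by
  refine ⟨bigP X0 h0, bigD X0 h0, bigP_proj X0 h0, bigD_exact X0 h0,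
    bigD_homexact X0 h0, ⟨?_⟩⟩
  exact (LinearEquiv.ofInjective (Di X0 h0 0) (dStep X0 h0 0).inj).trans
    (LinearEquiv.ofEq _ _ (bigD_ker X0 h0).symm)

end DingWork
end AssemblySec
/-- A left `R`-module `M` is Ding projective iff it admits an exact
sequence of Ding projective modules, with `M` the kernel of the middle map, which stays
exact under `Hom_R(-, H)` for every Gorenstein flat module `H`. -/
theorem ding_projective_iff_sequence_hom_gorenstein_flat_exact (R : Type u) [Ring R]
    (M : Type u) [AddCommGroup M] [Module R M] :
    IsDingProjective R M ↔
      ∃ (D : ℤ → ModuleCat.{u} R) (d : ∀ n : ℤ, (D (n + 1) : Type u) →ₗ[R] D n),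
        (∀ n, IsDingProjective R (D n)) ∧
        (∀ n, Function.Exact (d (n + 1)) (d n)) ∧
        (∀ (H : Type u) [AddCommGroup H] [Module R H], IsGorensteinFlat R H →
          ∀ n : ℤ, Function.Exact
            (fun g : (D n : Type u) →ₗ[R] H => g ∘ₗ d n)
            (fun g : (D (n + 1) : Type u) →ₗ[R] H => g ∘ₗ d (n + 1))) ∧
        Nonempty (M ≃ₗ[R] LinearMap.ker (d (-1))) := by
  constructor
  · intro hM
    exact ⟨fun _ => ModuleCat.of R M, fun n => DingWork.pard (R := R) M n, fun _ => hM,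
      fun n => DingWork.pard_exact n, fun H _ _ _ n => DingWork.pard_hom_exact n,
      ⟨DingWork.kerZeroEquiv _ fun x => by
        show (DingWork.pard (R := R) M (-1)) x = 0
        rw [DingWork.pard_neg_one_eq_zero]; rfl⟩⟩
  · intro h
    obtain ⟨D, dd, hDding, hdex, hdhom, ⟨e⟩⟩ := h
    have hdhom' : ∀ (F : Type u) [AddCommGroup F] [Module R F], IsFlatModule R F →
        ∀ n : ℤ, Function.Exact
          (fun g : (D n : Type u) →ₗ[R] F => g ∘ₗ dd n)
          (fun g : (D (n + 1) : Type u) →ₗ[R] F => g ∘ₗ dd (n + 1)) :=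
      fun F _ _ hF n => hdhom F (DingWork.isGorensteinFlat_of_flat F hF) n
    have htw := DingWork.complex_towers D dd (DingWork.DingCP R) hDding hdex hdhom'
      (ModuleCat.of R M)
      ⟨-1, ⟨e.trans (LinearEquiv.ofEq _ _ (LinearMap.exact_iff.mp (hdex (-1))))⟩⟩
    have hN : DingWork.Nice R (ModuleCat.of R M) := DingWork.Nice.kg htw.1 htw.2
    exact hN.isDingProjective
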